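/- arXiv:2307.05166 — 4 statements merged into one kernel-verified Lean document; each statement's English description precedes it below -/
import Mathlib

section
/- Let (Γ, μ) be a probability space and T : Γ → Γ a measure-preserving map. Let ε, k be real numbers with 0 < ε and 1 ≤ k ≤ 1/ε, and let E ⊆ Γ be a measurable set with μ(E) = 1 − ε. Let B be the set of points x ∈ Γ at which the Birkhoff time average Â_E(x) = lim_{n→∞} (1/n) ∑_{i=0}^{n−1} 1_E(T^i x) exists and satisfies Â_E(x) < 1 − kε. Then μ(B) < 1/k. -/
open MeasureTheory Filter

/-- The discrete Birkhoff time average up to time `n` of the set `A`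
along the orbit of `x` under the map `T`. -/
noncomputable def birkhoffAvg {Γ : Type*} (T : Γ → Γ) (A : Set Γ) (n : ℕ) (x : Γ) : ℝ :=
  (n : ℝ)⁻¹ * ∑ i ∈ Finset.range n, A.indicator (fun _ => (1 : ℝ)) (T^[i] x)

theorem stmt_0 {Γ : Type*} [MeasurableSpace Γ] (μ : Measure Γ) [IsProbabilityMeasure μ]
    (T : Γ → Γ) (hT : MeasurePreserving T μ μ)
    (ε k : ℝ) (hε : 0 < ε) (hk1 : 1 ≤ k) (hk2 : k ≤ 1 / ε)
    (E : Set Γ) (hE : MeasurableSet E) (hEμ : μ E = ENNReal.ofReal (1 - ε))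
    (B : Set Γ)
    (hB : B = {x : Γ | ∃ L : ℝ,
      Tendsto (fun n => birkhoffAvg T E n x) atTop (nhds L) ∧ L < 1 - k * ε}) :
    μ B < ENNReal.ofReal (1 / k) := by
  have hk0 : (0:ℝ) < k := lt_of_lt_of_le one_pos hk1
  have hε1 : ε ≤ 1 := by
    rw [le_div_iff₀ hε] at hk2
    nlinarith
  have hkε : 0 < k * ε := mul_pos hk0 hε
  -- the averaged indicator of the complement, in ℝ≥0∞
  set F : ℕ → Γ → ENNReal := fun n x =>
    (n : ENNReal)⁻¹ * ∑ i ∈ Finset.range n, (Eᶜ).indicator (fun _ => (1:ENNReal)) (T^[i] x)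
    with hF
  have hTm : Measurable T := hT.measurable
  have hterm : ∀ i : ℕ, Measurable fun x => (Eᶜ).indicator (fun _ => (1:ENNReal)) (T^[i] x) :=
    fun i => (measurable_const.indicator hE.compl).comp (hTm.iterate i)
  have hFmeas : ∀ n, Measurable (F n) := by
    intro n
    exact (Finset.measurable_sum _ fun i _ => hterm i).const_mul _
  -- liminf function
  set h : Γ → ENNReal := fun x => Filter.liminf (fun n => F n x) atTop with hh
  have hhm : Measurable h := .liminf hFmeas
  -- measure of the complement
  have hμEc : μ Eᶜ = ENNReal.ofReal ε := by
    rw [measure_compl hE (measure_ne_top μ E), hEμ, measure_univ]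
    rw [show (1:ENNReal) = ENNReal.ofReal 1 by simp]
    rw [← ENNReal.ofReal_sub _ (by linarith)]
    norm_num
  -- lintegral of F n
  have hFint : ∀ n : ℕ, 1 ≤ n → ∫⁻ x, F n x ∂μ = ENNReal.ofReal ε := by
    intro n hn
    have heq : ∫⁻ x, F n x ∂μ
        = (n : ENNReal)⁻¹ * ∑ i ∈ Finset.range n,
            ∫⁻ x, (Eᶜ).indicator (fun _ => (1:ENNReal)) (T^[i] x) ∂μ := by
      rw [hF]
      simp only
      rw [lintegral_const_mul _ (Finset.measurable_sum _ fun i _ => hterm i)]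
      congr 1
      exact lintegral_finset_sum _ fun i _ => hterm i
    rw [heq]
    have hpi : ∀ i : ℕ, ∫⁻ x, (Eᶜ).indicator (fun _ => (1:ENNReal)) (T^[i] x) ∂μ = μ Eᶜ := by
      intro i
      rw [lintegral_indicator_const_comp (hTm.iterate i) hE.compl 1, one_mul,
        (hT.iterate i).measure_preimage hE.compl.nullMeasurableSet]
    simp only [hpi, Finset.sum_const, Finset.card_range, nsmul_eq_mul]
    rw [← mul_assoc, ENNReal.inv_mul_cancel (by exact_mod_cast Nat.one_le_iff_ne_zero.mp hn)
      (ENNReal.natCast_ne_top n), one_mul, hμEc]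
  -- Fatou
  have hFatou : ∫⁻ x, h x ∂μ ≤ ENNReal.ofReal ε := by
    calc ∫⁻ x, h x ∂μ ≤ Filter.liminf (fun n => ∫⁻ x, F n x ∂μ) atTop :=
          lintegral_liminf_le hFmeas
      _ = ENNReal.ofReal ε := by
          have : (fun n => ∫⁻ x, F n x ∂μ) =ᶠ[atTop] fun _ => ENNReal.ofReal ε :=
            eventually_atTop.2 ⟨1, fun n hn => hFint n hn⟩
          rw [Filter.liminf_congr this, Filter.liminf_const]
  -- F n x = ofReal (1 - birkhoffAvg) for n ≥ 1
  have hFreal : ∀ (x : Γ) (n : ℕ), 1 ≤ n →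
      F n x = ENNReal.ofReal (1 - birkhoffAvg T E n x) := by
    intro x n hn
    have hn0 : (n:ℝ) ≠ 0 := by exact_mod_cast Nat.one_le_iff_ne_zero.mp hn
    have hsum : (1 : ℝ) - birkhoffAvg T E n x
        = (n:ℝ)⁻¹ * ∑ i ∈ Finset.range n, (Eᶜ).indicator (fun _ => (1:ℝ)) (T^[i] x) := by
      rw [birkhoffAvg]
      have : ∀ y : Γ, (Eᶜ).indicator (fun _ => (1:ℝ)) y = 1 - E.indicator (fun _ => (1:ℝ)) y := by
        intro y
        by_cases hy : y ∈ E <;> simp [Set.indicator_apply, hy]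
      simp only [this, Finset.sum_sub_distrib, Finset.sum_const, Finset.card_range, nsmul_eq_mul,
        mul_one, mul_sub, inv_mul_cancel₀ hn0]
    rw [hsum, ENNReal.ofReal_mul (by positivity),
      ENNReal.ofReal_sum_of_nonneg (fun i _ => Set.indicator_nonneg (fun _ _ => zero_le_one) _)]
    have h1 : ENNReal.ofReal ((n:ℝ)⁻¹) = (n:ENNReal)⁻¹ := by
      rw [ENNReal.ofReal_inv_of_pos (by positivity), ENNReal.ofReal_natCast]
    have h2 : ∀ i : ℕ, ENNReal.ofReal ((Eᶜ).indicator (fun _ => (1:ℝ)) (T^[i] x))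
        = (Eᶜ).indicator (fun _ => (1:ENNReal)) (T^[i] x) := by
      intro i
      by_cases hy : T^[i] x ∈ Eᶜ <;> simp [Set.indicator_apply, hy]
    rw [h1]
    simp only [h2]
    rfl
  -- B ⊆ A where A := {x | ofReal (k*ε) < h x}
  set c : ENNReal := ENNReal.ofReal (k * ε) with hc
  set A : Set Γ := {x | c < h x} with hA
  have hAmeas : MeasurableSet A := measurableSet_lt measurable_const hhm
  have hBA : B ⊆ A := by
    intro x hx
    rw [hB] at hx
    obtain ⟨L, hL, hLlt⟩ := hx
    have hten : Tendsto (fun n => F n x) atTop (nhds (ENNReal.ofReal (1 - L))) := by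
      have h1 : Tendsto (fun n => (1:ℝ) - birkhoffAvg T E n x) atTop (nhds (1 - L)) :=
        tendsto_const_nhds.sub hL
      have h2 : Tendsto (fun n => ENNReal.ofReal (1 - birkhoffAvg T E n x)) atTop
          (nhds (ENNReal.ofReal (1 - L))) := (ENNReal.continuous_ofReal.tendsto _).comp h1
      exact h2.congr' (eventually_atTop.2 ⟨1, fun n hn => (hFreal x n hn).symm⟩)
    have hlim : h x = ENNReal.ofReal (1 - L) := hten.liminf_eq
    rw [hA, Set.mem_setOf_eq, hlim, hc]
    exact ENNReal.ofReal_lt_ofReal_iff (by linarith) |>.2 (by linarith)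
  refine lt_of_le_of_lt (measure_mono hBA) ?_
  -- now show μ A < ofReal (1/k)
  by_contra hcon
  push_neg at hcon
  have hμA0 : μ A ≠ 0 := by
    intro h0
    rw [h0] at hcon
    exact absurd (le_antisymm (le_of_le_of_eq hcon rfl) zero_le).symm
      (by simp [ENNReal.ofReal_eq_zero]; positivity)
  -- exhaust A by sets where h ≥ c + 1/m
  set S : ℕ → Set Γ := fun m => A ∩ {x | c + (m : ENNReal)⁻¹ ≤ h x} with hS
  have hSmeas : ∀ m, MeasurableSet (S m) :=
    fun m => hAmeas.inter (measurableSet_le measurable_const hhm)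
  have hAsub : A ⊆ ⋃ m, S m := by
    intro x hx
    have hcx : c < h x := hx
    obtain ⟨m, hm⟩ : ∃ m : ℕ, (m : ENNReal)⁻¹ < h x - c :=
      ENNReal.exists_inv_nat_lt (by simpa using (tsub_pos_of_lt hcx).ne')
    refine Set.mem_iUnion.2 ⟨m, hx, ?_⟩
    calc c + (m:ENNReal)⁻¹ ≤ c + (h x - c) := by
          exact add_le_add_right hm.le c
      _ = h x := add_tsub_cancel_of_le hcx.le
  obtain ⟨m, hm0⟩ : ∃ m, μ (S m) ≠ 0 := by
    by_contra hall
    push_neg at hall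
    exact hμA0 (le_antisymm (le_trans (measure_mono hAsub) (le_of_eq (measure_iUnion_null hall)))
      zero_le)
  -- lower bound the integral
  have hlow : c * μ A + (m:ENNReal)⁻¹ * μ (S m) ≤ ∫⁻ x in A, h x ∂μ := by
    have hφ : ∀ x ∈ A, c + (S m).indicator (fun _ => (m:ENNReal)⁻¹) x ≤ h x := by
      intro x hx
      by_cases hxs : x ∈ S m
      · simpa [Set.indicator_of_mem hxs] using hxs.2
      · simpa [Set.indicator_of_notMem hxs] using (hx : c < h x).le
    calc c * μ A + (m:ENNReal)⁻¹ * μ (S m)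
        = ∫⁻ x in A, (c + (S m).indicator (fun _ => (m:ENNReal)⁻¹) x) ∂μ := by
          rw [lintegral_add_left measurable_const, setLIntegral_const]
          congr 1
          rw [setLIntegral_indicator (hSmeas m), setLIntegral_const,
            Set.inter_eq_left.2 Set.inter_subset_left]
      _ ≤ ∫⁻ x in A, h x ∂μ := setLIntegral_mono hhm hφ
  have hcA : c * μ A ≥ ENNReal.ofReal ε := by
    calc c * μ A ≥ c * ENNReal.ofReal (1 / k) := mul_le_mul_right hcon c
      _ = ENNReal.ofReal (k * ε * (1 / k)) := by
          rw [hc, ← ENNReal.ofReal_mul (le_of_lt hkε)]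
      _ = ENNReal.ofReal ε := by
          congr 1
          field_simp
  have hfin : c * μ A ≠ ⊤ :=
    ENNReal.mul_ne_top ENNReal.ofReal_ne_top (measure_ne_top μ A)
  have hpos : (m:ENNReal)⁻¹ * μ (S m) ≠ 0 := by
    apply mul_ne_zero _ hm0
    simp [ENNReal.inv_ne_zero]
  have : ENNReal.ofReal ε < ∫⁻ x in A, h x ∂μ := by
    calc ENNReal.ofReal ε ≤ c * μ A := hcA
      _ < c * μ A + (m:ENNReal)⁻¹ * μ (S m) := ENNReal.lt_add_right hfin hpos
      _ ≤ ∫⁻ x in A, h x ∂μ := hlow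
  have hle : ∫⁻ x in A, h x ∂μ ≤ ENNReal.ofReal ε :=
    le_trans (setLIntegral_le_lintegral _ _) hFatou
  exact absurd (lt_of_lt_of_le this hle) (lt_irrefl _)
end

section
/- Let (Γ, μ) be a probability space and T : Γ → Γ a measure-preserving map. Let ε, δ be real numbers with 0 ≤ ε ≤ 1 and 0 ≤ δ ≤ 1. Let E ⊆ Γ be a measurable set and let G' ⊆ Γ be a measurable set with μ(G') = 1 − δ such that for every x ∈ G' the Birkhoff time average Â_E(x) = lim_{n→∞} (1/n) ∑_{i=0}^{n−1} 1_E(T^i x) exists and satisfies Â_E(x) ≥ 1 − ε. Then for every x ∈ G' one has |Â_E(x) − μ(E)| ≤ ε + δ − εδ. -/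
open MeasureTheory Filter

theorem stmt_3 {Γ : Type*} [MeasurableSpace Γ] (μ : Measure Γ) [IsProbabilityMeasure μ]
    (T : Γ → Γ) (hT : MeasurePreserving T μ μ)
    (ε δ : ℝ) (hε0 : 0 ≤ ε) (hε1 : ε ≤ 1) (hδ0 : 0 ≤ δ) (hδ1 : δ ≤ 1)
    (E : Set Γ) (hE : MeasurableSet E)
    (G' : Set Γ) (hG' : MeasurableSet G') (hG'μ : μ G' = ENNReal.ofReal (1 - δ))
    (havg : ∀ x ∈ G', ∃ L : ℝ,
      Tendsto (fun n => birkhoffAvg T E n x) atTop (nhds L) ∧ 1 - ε ≤ L) :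
    ∀ x ∈ G', ∀ L : ℝ, Tendsto (fun n => birkhoffAvg T E n x) atTop (nhds L) →
      |L - (μ E).toReal| ≤ ε + δ - ε * δ := by
  have hTm : Measurable T := hT.measurable
  set g : Γ → ℝ := E.indicator (fun _ => (1 : ℝ)) with hg
  have hgmeas : Measurable g := measurable_const.indicator hE
  have hg0 : ∀ y, 0 ≤ g y := fun y => Set.indicator_nonneg (fun _ _ => zero_le_one) y
  have hg1 : ∀ y, g y ≤ 1 := by
    intro y
    by_cases h : y ∈ E <;> simp [hg, Set.indicator, h]
  have havg0 : ∀ n x, 0 ≤ birkhoffAvg T E n x := by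
    intro n x
    exact mul_nonneg (by positivity) (Finset.sum_nonneg fun i _ => hg0 _)
  have havg1 : ∀ n x, birkhoffAvg T E n x ≤ 1 := by
    intro n x
    rcases Nat.eq_zero_or_pos n with h | h
    · simp [birkhoffAvg, h]
    · have hsum : ∑ i ∈ Finset.range n, g (T^[i] x) ≤ (n : ℝ) := by
        calc ∑ i ∈ Finset.range n, g (T^[i] x) ≤ ∑ i ∈ Finset.range n, (1 : ℝ) :=
              Finset.sum_le_sum fun i _ => hg1 _
          _ = (n : ℝ) := by simp
      have hn : (0 : ℝ) < n := by exact_mod_cast h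
      calc birkhoffAvg T E n x ≤ (n : ℝ)⁻¹ * (n : ℝ) :=
            mul_le_mul_of_nonneg_left hsum (by positivity)
        _ = 1 := by field_simp
  have havgmeas : ∀ n, Measurable fun x => birkhoffAvg T E n x := by
    intro n
    exact (Finset.measurable_sum _ fun i _ => hgmeas.comp (hTm.iterate i)).const_mul _
  have hint_i : ∀ i : ℕ, Integrable (fun x => g (T^[i] x)) μ := by
    intro i
    refine Integrable.mono' (integrable_const (1 : ℝ))
      ((hgmeas.comp (hTm.iterate i)).aestronglyMeasurable) ?_
    filter_upwards with x
    rw [Real.norm_eq_abs, abs_le]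
    exact ⟨by linarith [hg0 (T^[i] x)], hg1 _⟩
  have hint_avg : ∀ n, Integrable (fun x => birkhoffAvg T E n x) μ := by
    intro n
    exact ((integrable_finset_sum (Finset.range n) fun i _ => hint_i i).const_mul _)
  have hI : ∀ i : ℕ, ∫ x, g (T^[i] x) ∂μ = (μ E).toReal := by
    intro i
    calc ∫ x, g (T^[i] x) ∂μ = ∫ y, g y ∂(Measure.map (T^[i]) μ) :=
          (integral_map (hTm.iterate i).aemeasurable hgmeas.aestronglyMeasurable).symm
      _ = ∫ y, g y ∂μ := by rw [(hT.iterate i).map_eq]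
      _ = (μ E).toReal := by rw [hg, integral_indicator_const _ hE]; simp; rfl
  have hIavg : ∀ n : ℕ, 1 ≤ n → ∫ x, birkhoffAvg T E n x ∂μ = (μ E).toReal := by
    intro n hn
    have hn' : (0 : ℝ) < n := by exact_mod_cast hn
    calc ∫ x, birkhoffAvg T E n x ∂μ
        = (n : ℝ)⁻¹ * ∫ x, ∑ i ∈ Finset.range n, g (T^[i] x) ∂μ := by
          simp_rw [birkhoffAvg]; rw [integral_const_mul]
      _ = (n : ℝ)⁻¹ * ∑ i ∈ Finset.range n, ∫ x, g (T^[i] x) ∂μ := by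
          rw [integral_finset_sum _ fun i _ => hint_i i]
      _ = (n : ℝ)⁻¹ * (n * (μ E).toReal) := by simp [hI]
      _ = (μ E).toReal := by field_simp
  -- limit function on G'
  classical
  set f : Γ → ℝ := fun x => if h : x ∈ G' then (havg x h).choose else 0 with hf
  have hf_tend : ∀ x ∈ G', Tendsto (fun n => birkhoffAvg T E n x) atTop (nhds (f x)) := by
    intro x hx
    simpa [hf, dif_pos hx] using (havg x hx).choose_spec.1
  have hf_lb : ∀ x ∈ G', 1 - ε ≤ f x := by
    intro x hx
    simpa [hf, dif_pos hx] using (havg x hx).choose_spec.2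
  -- dominated convergence on G'
  have hDC : Tendsto (fun n => ∫ x in G', birkhoffAvg T E n x ∂μ) atTop
      (nhds (∫ x in G', f x ∂μ)) := by
    refine tendsto_integral_of_dominated_convergence (fun _ => (1 : ℝ))
      (fun n => ((havgmeas n).aestronglyMeasurable.restrict)) (integrable_const 1) ?_ ?_
    · intro n
      filter_upwards with x
      rw [Real.norm_eq_abs, abs_le]
      exact ⟨by linarith [havg0 n x], havg1 n x⟩
    · exact ae_restrict_of_forall_mem hG' hf_tend
  have hf_bnd : ∀ x ∈ G', 0 ≤ f x ∧ f x ≤ 1 := by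
    intro x hx
    constructor
    · exact ge_of_tendsto (hf_tend x hx) (by filter_upwards with n using havg0 n x)
    · exact le_of_tendsto (hf_tend x hx) (by filter_upwards with n using havg1 n x)
  have hf_meas : AEStronglyMeasurable f (μ.restrict G') :=
    aestronglyMeasurable_of_tendsto_ae atTop
      (fun n => (havgmeas n).aestronglyMeasurable.restrict)
      (ae_restrict_of_forall_mem hG' hf_tend)
  have hf_int : IntegrableOn f G' μ := by
    refine Integrable.mono' (integrable_const (1 : ℝ)) hf_meas ?_
    refine ae_restrict_of_forall_mem hG' fun x hx => ?_
    rw [Real.norm_eq_abs, abs_le]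
    exact ⟨by linarith [(hf_bnd x hx).1], (hf_bnd x hx).2⟩
  have hμG' : (μ G').toReal = 1 - δ := by
    rw [hG'μ, ENNReal.toReal_ofReal (by linarith)]
  have hfint_lb : (1 - ε) * (1 - δ) ≤ ∫ x in G', f x ∂μ := by
    have := setIntegral_ge_of_const_le_real hG' (measure_ne_top μ G') hf_lb hf_int
    rwa [Measure.real, hμG'] at this
  have hfint_ub : ∫ x in G', f x ∂μ ≤ (μ E).toReal := by
    refine le_of_tendsto hDC ?_
    filter_upwards [eventually_ge_atTop 1] with n hn
    calc ∫ x in G', birkhoffAvg T E n x ∂μ ≤ ∫ x, birkhoffAvg T E n x ∂μ := by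
          refine setIntegral_le_integral (hint_avg n) ?_
          filter_upwards with x using havg0 n x
      _ = (μ E).toReal := hIavg n hn
  have hE_lb : (1 - ε) * (1 - δ) ≤ (μ E).toReal := le_trans hfint_lb hfint_ub
  have hE_ub : (μ E).toReal ≤ 1 := by
    have h := prob_le_one (μ := μ) (s := E)
    have h1 := ENNReal.toReal_mono (by simp) h
    simpa using h1
  have hE_0 : 0 ≤ (μ E).toReal := ENNReal.toReal_nonneg
  intro x hx L hL
  obtain ⟨L', hL', hL'b⟩ := havg x hx
  have hLL' : L = L' := tendsto_nhds_unique hL hL'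
  have hL_lb : 1 - ε ≤ L := hLL' ▸ hL'b
  have hL_ub : L ≤ 1 := le_of_tendsto hL (by filter_upwards with n using havg1 n x)
  rw [abs_le]
  constructor <;> nlinarith
end

section
/- Let (Γ, μ) be a probability space and T : Γ → Γ a measure-preserving map. Let ε be a real number with 0 < ε ≤ 1, and let E ⊆ Γ be a measurable set with μ(E) = 1 − ε. Let G be the set of points x ∈ Γ at which the Birkhoff time average Â_E(x) = lim_{n→∞} (1/n) ∑_{i=0}^{n−1} 1_E(T^i x) exists and satisfies Â_E(x) ≥ 1 − √ε. Then μ(G) > 1 − √ε, and for every x ∈ G one has |Â_E(x) − μ(E)| ≤ √ε. -/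
open MeasureTheory Filter

section Seq
open Filter
variable {u v : ℕ → ℝ}

lemma limsup_le_limsup_of_sub (h0u : ∀ n, 0 ≤ u n) (h1u : ∀ n, u n ≤ 1)
    (h0v : ∀ n, 0 ≤ v n) (h1v : ∀ n, v n ≤ 1)
    (h : Tendsto (fun n => u n - v n) atTop (nhds 0)) :
    limsup u atTop ≤ limsup v atTop := by
  refine le_of_forall_pos_le_add fun ε hε => ?_
  have hev : ∀ᶠ n in atTop, u n ≤ v n + ε :=
    (h.eventually_lt_const hε).mono fun n hn => by linarith
  have h1 : limsup u atTop ≤ limsup (fun n => v n + ε) atTop :=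
    limsup_le_limsup hev
      ((isBoundedUnder_of ⟨0, h0u⟩ : IsBoundedUnder (· ≥ ·) atTop u).isCoboundedUnder_le)
      (isBoundedUnder_of ⟨1 + ε, fun n => by have := h1v n; linarith⟩)
  rwa [limsup_add_const atTop v ε (isBoundedUnder_of ⟨1, h1v⟩)
      ((isBoundedUnder_of ⟨0, h0v⟩ : IsBoundedUnder (· ≥ ·) atTop v).isCoboundedUnder_le)] at h1

lemma liminf_le_liminf_of_sub (h0u : ∀ n, 0 ≤ u n) (h1u : ∀ n, u n ≤ 1)
    (h0v : ∀ n, 0 ≤ v n) (h1v : ∀ n, v n ≤ 1)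
    (h : Tendsto (fun n => u n - v n) atTop (nhds 0)) :
    liminf u atTop ≤ liminf v atTop := by
  refine le_of_forall_pos_le_add fun ε hε => ?_
  have hev : ∀ᶠ n in atTop, u n ≤ v n + ε :=
    (h.eventually_lt_const hε).mono fun n hn => by linarith
  have h1 : liminf u atTop ≤ liminf (fun n => v n + ε) atTop :=
    liminf_le_liminf hev (isBoundedUnder_of ⟨0, h0u⟩)
      ((isBoundedUnder_of ⟨1 + ε, fun n => by have := h1v n; linarith⟩ :
        IsBoundedUnder (· ≤ ·) atTop _).isCoboundedUnder_ge)
  rwa [liminf_add_const atTop v ε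
      ((isBoundedUnder_of ⟨1, h1v⟩ : IsBoundedUnder (· ≤ ·) atTop v).isCoboundedUnder_ge)
      (isBoundedUnder_of ⟨0, h0v⟩)] at h1

lemma le_limsup_iff_rat (h0 : ∀ n, 0 ≤ u n) (h1 : ∀ n, u n ≤ 1) {b : ℝ} :
    b ≤ limsup u atTop ↔ ∀ q : ℚ, (q : ℝ) < b → ∃ᶠ n in atTop, (q : ℝ) < u n := by
  constructor
  · intro h q hq
    exact frequently_lt_of_lt_limsup
      ((isBoundedUnder_of ⟨0, h0⟩ :
        IsBoundedUnder (· ≥ ·) atTop u).isCoboundedUnder_le) (lt_of_lt_of_le hq h)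
  · intro h
    by_contra hcon
    push_neg at hcon
    obtain ⟨q, hq1, hq2⟩ := exists_rat_btwn hcon
    have := le_limsup_of_frequently_le ((h q hq2).mono fun n hn => hn.le)
      (isBoundedUnder_of ⟨1, h1⟩)
    exact absurd this (not_le.mpr hq1)

lemma liminf_le_iff_rat (h0 : ∀ n, 0 ≤ u n) (h1 : ∀ n, u n ≤ 1) {a : ℝ} :
    liminf u atTop ≤ a ↔ ∀ q : ℚ, a < (q : ℝ) → ∃ᶠ n in atTop, u n < (q : ℝ) := by
  constructor
  · intro h q hq
    exact frequently_lt_of_liminf_lt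
      ((isBoundedUnder_of ⟨1, h1⟩ :
        IsBoundedUnder (· ≤ ·) atTop u).isCoboundedUnder_ge) (lt_of_le_of_lt h hq)
  · intro h
    by_contra hcon
    push_neg at hcon
    obtain ⟨q, hq1, hq2⟩ := exists_rat_btwn hcon
    have := liminf_le_of_frequently_le ((h q hq1).mono fun n hn => hn.le)
      (isBoundedUnder_of ⟨0, h0⟩)
    exact absurd this (not_le.mpr hq2)

end Seq

namespace FAPP

variable {Γ : Type*} [MeasurableSpace Γ] {μ : Measure Γ} [IsProbabilityMeasure μ]
  {T : Γ → Γ} {g : Γ → ℝ}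

/-- running maximum `max (0, S₁, ..., Sₙ)` of Birkhoff sums. -/
noncomputable def mxS (T : Γ → Γ) (g : Γ → ℝ) : ℕ → Γ → ℝ
  | 0 => fun _ => 0
  | (n+1) => fun x => max (mxS T g n x) (birkhoffSum T g (n+1) x)

lemma mxS_nonneg (n : ℕ) (x : Γ) : 0 ≤ mxS T g n x := by
  induction n with
  | zero => simp [mxS]
  | succ n ih => exact le_max_of_le_left ih

lemma mxS_mono {m n : ℕ} (h : m ≤ n) (x : Γ) : mxS T g m x ≤ mxS T g n x := by
  induction n with
  | zero => simpa [Nat.le_zero.mp h] using le_refl _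
  | succ n ih =>
    rcases Nat.le_succ_iff.mp h with h' | h'
    · exact (ih h').trans (le_max_left _ _)
    · simp [h']

lemma birkhoffSum_le_mxS {k n : ℕ} (hk : k ≤ n) (x : Γ) :
    birkhoffSum T g k x ≤ mxS T g n x := by
  rcases Nat.eq_zero_or_pos k with rfl | hk0
  · simpa [birkhoffSum_zero] using mxS_nonneg (T := T) (g := g) n x
  · obtain ⟨m, rfl⟩ := Nat.exists_eq_add_of_lt hk0
    calc birkhoffSum T g (0 + m + 1) x ≤ mxS T g (0 + m + 1) x := le_max_right _ _
    _ ≤ mxS T g n x := mxS_mono hk x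

lemma measurable_birkhoffSum (hg : Measurable g) (hX : Measurable T) (n : ℕ) :
    Measurable (birkhoffSum T g n) :=
  Finset.measurable_sum _ fun i _ => hg.comp (hX.iterate i)

lemma measurable_mxS (hg : Measurable g) (hX : Measurable T) (n : ℕ) :
    Measurable (mxS T g n) := by
  induction n with
  | zero => simpa [mxS] using measurable_const
  | succ n ih => exact ih.max (measurable_birkhoffSum hg hX (n+1))

lemma abs_birkhoffSum_le {C : ℝ} (hC : ∀ x, |g x| ≤ C) (n : ℕ) (x : Γ) :
    |birkhoffSum T g n x| ≤ n * C := by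
  calc |birkhoffSum T g n x| ≤ ∑ i ∈ Finset.range n, |g (T^[i] x)| :=
        Finset.abs_sum_le_sum_abs _ _
  _ ≤ ∑ _i ∈ Finset.range n, C := Finset.sum_le_sum fun i _ => hC _
  _ = n * C := by simp [mul_comm]

lemma mxS_le {C : ℝ} (hC0 : 0 ≤ C) (hC : ∀ x, |g x| ≤ C) (n : ℕ) (x : Γ) :
    mxS T g n x ≤ n * C := by
  induction n with
  | zero => simp [mxS]
  | succ n ih =>
    refine max_le (ih.trans ?_) ((abs_le.mp (abs_birkhoffSum_le hC (n+1) x)).2)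
    have : (n : ℝ) ≤ (n+1 : ℕ) := by exact_mod_cast Nat.le_succ n
    nlinarith

/-- key pointwise inequality for the maximal ergodic theorem -/
lemma mxS_le_max (n : ℕ) (x : Γ) :
    mxS T g n x ≤ max 0 (g x + mxS T g n (T x)) := by
  induction n with
  | zero => simp [mxS]
  | succ n ih =>
    refine max_le (ih.trans (max_le_max le_rfl (add_le_add le_rfl (mxS_mono n.le_succ _)))) ?_
    refine le_max_of_le_right ?_
    rw [birkhoffSum_succ']
    exact add_le_add le_rfl (birkhoffSum_le_mxS n.le_succ _)

set_option linter.unusedSectionVars false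
set_option maxHeartbeats 1000000

/-- integrability of bounded measurable functions on a probability space -/
lemma integrable_of_bounded {h : Γ → ℝ} (hm : Measurable h) {C : ℝ} (hC : ∀ x, |h x| ≤ C) :
    Integrable h μ := by
  refine ⟨hm.aestronglyMeasurable, ?_⟩
  exact MeasureTheory.HasFiniteIntegral.of_bounded (C := C)
    (Eventually.of_forall (fun x => by simpa [Real.norm_eq_abs] using hC x))

/-- **Maximal ergodic theorem** -/
theorem maximal_ergodic (hT : MeasurePreserving T μ μ) (hg : Measurable g)
    {C : ℝ} (hC0 : 0 ≤ C) (hC : ∀ x, |g x| ≤ C) :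
    0 ≤ ∫ x in {x | ∃ n, 0 < birkhoffSum T g n x}, g x ∂μ := by
  have hTm : Measurable T := hT.measurable
  set A : ℕ → Set Γ := fun n => {x | 0 < mxS T g n x} with hA
  have hAm : ∀ n, MeasurableSet (A n) :=
    fun n => measurableSet_lt measurable_const (measurable_mxS hg hTm n)
  have hginteg : Integrable g μ := integrable_of_bounded hg hC
  have hMpint : ∀ n, Integrable (mxS T g n) μ := fun n =>
    integrable_of_bounded (measurable_mxS hg hTm n) (C := n * C)
      (fun x => abs_le.mpr ⟨by nlinarith [mxS_nonneg (T := T) (g := g) n x],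
        mxS_le hC0 hC n x⟩)
  have hMpTint : ∀ n, Integrable (fun x => mxS T g n (T x)) μ := fun n =>
    integrable_of_bounded ((measurable_mxS hg hTm n).comp hTm) (C := n * C)
      (fun x => abs_le.mpr ⟨by nlinarith [mxS_nonneg (T := T) (g := g) n (T x)],
        mxS_le hC0 hC n (T x)⟩)
  -- each  ∫_{A n} g ≥ 0
  have key : ∀ n, 0 ≤ ∫ x in A n, g x ∂μ := by
    intro n
    have hpt : ∀ x ∈ A n, mxS T g n x - mxS T g n (T x) ≤ g x := by
      intro x hx
      have h1 := mxS_le_max (T := T) (g := g) n x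
      rcases le_or_gt (g x + mxS T g n (T x)) 0 with h2 | h2
      · exact absurd (lt_of_lt_of_le hx (h1.trans (by simpa using h2))) (lt_irrefl 0)
      · have := h1.trans_eq (max_eq_right h2.le)
        linarith
    have hsub_int : Integrable (fun x => mxS T g n x - mxS T g n (T x)) μ :=
      (hMpint n).sub (hMpTint n)
    have h2 : ∫ x in A n, (mxS T g n x - mxS T g n (T x)) ∂μ ≤ ∫ x in A n, g x ∂μ :=
      setIntegral_mono_on (hsub_int.integrableOn) (hginteg.integrableOn) (hAm n) hpt
    refine le_trans ?_ h2
    -- ∫_{Aⁿᶜ} of the difference is ≤ 0 and total integral is 0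
    have hcompl : ∫ x in (A n)ᶜ, (mxS T g n x - mxS T g n (T x)) ∂μ ≤ 0 := by
      refine setIntegral_nonpos_ae (hAm n).compl (Eventually.of_forall (fun x hx => ?_))
      have h0 : mxS T g n x = 0 := le_antisymm (not_lt.mp hx) (mxS_nonneg n x)
      have := mxS_nonneg (T := T) (g := g) n (T x)
      simp only [h0]; linarith
    have htot : ∫ x, (mxS T g n x - mxS T g n (T x)) ∂μ = 0 := by
      rw [integral_sub (hMpint n) (hMpTint n)]
      have : ∫ x, mxS T g n (T x) ∂μ = ∫ x, mxS T g n x ∂μ := by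
        rw [← integral_map hT.aemeasurable (measurable_mxS hg hTm n).aestronglyMeasurable,
          hT.map_eq]
      rw [this]; ring
    have hsplit := integral_add_compl (hAm n) hsub_int
    linarith
  -- pass to the limit
  have hmono : Monotone A := fun m n h x hx => lt_of_lt_of_le hx (mxS_mono h x)
  have hUnion : (⋃ n, A n) = {x | ∃ n, 0 < birkhoffSum T g n x} := by
    ext x
    simp only [Set.mem_iUnion, Set.mem_setOf_eq, hA]
    constructor
    · rintro ⟨n, hn⟩
      -- max over k ≤ n positive gives some birkhoffSum positive
      by_contra hcon
      push_neg at hcon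
      have hmx : ∀ m, mxS T g m x ≤ 0 := by
        intro m
        induction m with
        | zero => simp [mxS]
        | succ m ih => exact max_le ih (hcon (m+1))
      exact absurd hn (not_lt.mpr (hmx n))
    · rintro ⟨n, hn⟩
      exact ⟨n, lt_of_lt_of_le hn (birkhoffSum_le_mxS le_rfl x)⟩
  have hlim := tendsto_setIntegral_of_monotone hAm hmono (hginteg.integrableOn)
  rw [hUnion] at hlim
  exact ge_of_tendsto' hlim key

end FAPP

namespace FAPP
set_option linter.unusedSectionVars false
set_option maxHeartbeats 1000000
open MeasureTheory Filter

variable {Γ : Type*} [MeasurableSpace Γ] {μ : Measure Γ} [IsProbabilityMeasure μ]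
  {T : Γ → Γ} {f : Γ → ℝ}

/-- the Birkhoff average -/
noncomputable def avgF (T : Γ → Γ) (f : Γ → ℝ) (n : ℕ) (x : Γ) : ℝ :=
  (n : ℝ)⁻¹ * birkhoffSum T f n x

lemma iter_mem_iff {D : Set Γ} (hDinv : ∀ x, T x ∈ D ↔ x ∈ D) (i : ℕ) (x : Γ) :
    T^[i] x ∈ D ↔ x ∈ D := by
  induction i generalizing x with
  | zero => simp
  | succ i ih => rw [Function.iterate_succ_apply]; rw [ih (T x)]; exact hDinv x

open Classical in
/-- Key consequence of the maximal ergodic theorem: on an invariant set all of whose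
points have some Birkhoff average above `β`, the integral is at least `β` times the measure. -/
theorem invariant_bound (hT : MeasurePreserving T μ μ) (hf : Measurable f)
    (hfb : ∀ x, |f x| ≤ 1) (β : ℝ) {D : Set Γ} (hDm : MeasurableSet D)
    (hDinv : ∀ x, T x ∈ D ↔ x ∈ D)
    (hD : ∀ x ∈ D, ∃ n : ℕ, 0 < birkhoffSum T f n x - n * β) :
    β * (μ D).toReal ≤ ∫ x in D, f x ∂μ := by
  set g : Γ → ℝ := D.indicator (fun y => f y - β) with hg
  have hgm : Measurable g := (hf.sub measurable_const).indicator hDm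
  have hgb : ∀ x, |g x| ≤ 1 + |β| := by
    intro x
    by_cases hx : x ∈ D
    · simp only [hg, Set.indicator_of_mem hx]
      calc |f x - β| ≤ |f x| + |β| := abs_sub _ _
      _ ≤ 1 + |β| := by have := hfb x; linarith
    · simp only [hg, Set.indicator_of_notMem hx, abs_zero]
      positivity
  have hsum : ∀ n x, birkhoffSum T g n x =
      if x ∈ D then birkhoffSum T f n x - n * β else 0 := by
    intro n x
    by_cases hx : x ∈ D
    · simp only [hx, if_true, birkhoffSum]
      have : ∀ i, g (T^[i] x) = f (T^[i] x) - β := fun i =>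
        Set.indicator_of_mem ((iter_mem_iff hDinv i x).mpr hx) _
      rw [Finset.sum_congr rfl fun i _ => this i, Finset.sum_sub_distrib]
      simp [mul_comm]
    · simp only [hx, if_false, birkhoffSum]
      have : ∀ i, g (T^[i] x) = 0 := fun i =>
        Set.indicator_of_notMem (fun h => hx ((iter_mem_iff hDinv i x).mp h)) _
      simp [this]
  have hset : {x | ∃ n, 0 < birkhoffSum T g n x} = D := by
    ext x
    simp only [Set.mem_setOf_eq]
    constructor
    · rintro ⟨n, hn⟩
      by_contra hx
      rw [hsum n x, if_neg hx] at hn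
      exact lt_irrefl 0 hn
    · intro hx
      obtain ⟨n, hn⟩ := hD x hx
      exact ⟨n, by rw [hsum n x, if_pos hx]; exact hn⟩
  have h0 := maximal_ergodic hT hgm (by positivity : (0:ℝ) ≤ 1 + |β|) hgb
  rw [hset] at h0
  have heq : ∫ x in D, g x ∂μ = ∫ x in D, (f x - β) ∂μ :=
    setIntegral_congr_fun hDm fun x hx => Set.indicator_of_mem hx _
  have hfi : Integrable f μ := integrable_of_bounded hf hfb
  have hsub : ∫ x in D, (f x - β) ∂μ = (∫ x in D, f x ∂μ) - β * (μ D).toReal := by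
    rw [integral_sub hfi.integrableOn (integrableOn_const (measure_ne_top μ D))]
    rw [setIntegral_const]
    simp [smul_eq_mul, mul_comm, measureReal_def]
  rw [heq, hsub] at h0
  linarith

lemma avgF_nonneg (hf0 : ∀ x, 0 ≤ f x) (n : ℕ) (x : Γ) : 0 ≤ avgF T f n x :=
  mul_nonneg (by positivity) (Finset.sum_nonneg fun i _ => hf0 _)

lemma avgF_le_one (hf1 : ∀ x, f x ≤ 1) (n : ℕ) (x : Γ) : avgF T f n x ≤ 1 := by
  rcases Nat.eq_zero_or_pos n with rfl | hn
  · simp [avgF]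
  · have hS : birkhoffSum T f n x ≤ n := by
      calc birkhoffSum T f n x ≤ ∑ _i ∈ Finset.range n, (1:ℝ) :=
        Finset.sum_le_sum fun i _ => hf1 _
      _ = n := by simp
    have hn' : (0:ℝ) < n := by exact_mod_cast hn
    calc (n : ℝ)⁻¹ * birkhoffSum T f n x ≤ (n : ℝ)⁻¹ * n :=
      mul_le_mul_of_nonneg_left hS (by positivity)
    _ = 1 := inv_mul_cancel₀ hn'.ne'

lemma measurable_avgF (hf : Measurable f) (hTm : Measurable T) (n : ℕ) :
    Measurable (avgF T f n) :=
  (measurable_birkhoffSum hf hTm n).const_mul _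

lemma tendsto_avgF_sub (hf0 : ∀ x, 0 ≤ f x) (hf1 : ∀ x, f x ≤ 1) (x : Γ) :
    Tendsto (fun n => avgF T f n (T x) - avgF T f n x) atTop (nhds 0) := by
  have key : ∀ n : ℕ, ‖avgF T f n (T x) - avgF T f n x‖ ≤ 2 / n := by
    intro n
    rcases Nat.eq_zero_or_pos n with rfl | hn
    · simp [avgF]
    · have hdiff : birkhoffSum T f n (T x) - birkhoffSum T f n x = f (T^[n] x) - f x :=
        birkhoffSum_apply_sub_birkhoffSum T f n x
      have heq : avgF T f n (T x) - avgF T f n x = (n:ℝ)⁻¹ * (f (T^[n] x) - f x) := by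
        rw [avgF, avgF, ← mul_sub, hdiff]
      have habs : ∀ y, |f y| ≤ 1 := fun y => abs_le.mpr ⟨by linarith [hf0 y], hf1 y⟩
      have h2 : |f (T^[n] x) - f x| ≤ 2 := by
        calc |f (T^[n] x) - f x| ≤ |f (T^[n] x)| + |f x| := abs_sub _ _
        _ ≤ 2 := by have := habs (T^[n] x); have := habs x; linarith
      rw [Real.norm_eq_abs, heq, abs_mul, abs_inv, Nat.abs_cast]
      calc (n:ℝ)⁻¹ * |f (T^[n] x) - f x| ≤ (n:ℝ)⁻¹ * 2 :=
        mul_le_mul_of_nonneg_left h2 (by positivity)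
      _ = 2 / n := by ring
  exact squeeze_zero_norm key (tendsto_const_div_atTop_nhds_zero_nat 2)

lemma limsup_avgF_comp (hf0 : ∀ x, 0 ≤ f x) (hf1 : ∀ x, f x ≤ 1) (x : Γ) :
    limsup (fun n => avgF T f n (T x)) atTop = limsup (fun n => avgF T f n x) atTop := by
  have h := tendsto_avgF_sub (T := T) hf0 hf1 x
  have h' : Tendsto (fun n => avgF T f n x - avgF T f n (T x)) atTop (nhds 0) := by
    simpa using h.neg
  exact le_antisymm
    (limsup_le_limsup_of_sub (fun n => avgF_nonneg hf0 n _) (fun n => avgF_le_one hf1 n _)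
      (fun n => avgF_nonneg hf0 n _) (fun n => avgF_le_one hf1 n _) h)
    (limsup_le_limsup_of_sub (fun n => avgF_nonneg hf0 n _) (fun n => avgF_le_one hf1 n _)
      (fun n => avgF_nonneg hf0 n _) (fun n => avgF_le_one hf1 n _) h')

lemma liminf_avgF_comp (hf0 : ∀ x, 0 ≤ f x) (hf1 : ∀ x, f x ≤ 1) (x : Γ) :
    liminf (fun n => avgF T f n (T x)) atTop = liminf (fun n => avgF T f n x) atTop := by
  have h := tendsto_avgF_sub (T := T) hf0 hf1 x
  have h' : Tendsto (fun n => avgF T f n x - avgF T f n (T x)) atTop (nhds 0) := by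
    simpa using h.neg
  exact le_antisymm
    (liminf_le_liminf_of_sub (fun n => avgF_nonneg hf0 n _) (fun n => avgF_le_one hf1 n _)
      (fun n => avgF_nonneg hf0 n _) (fun n => avgF_le_one hf1 n _) h)
    (liminf_le_liminf_of_sub (fun n => avgF_nonneg hf0 n _) (fun n => avgF_le_one hf1 n _)
      (fun n => avgF_nonneg hf0 n _) (fun n => avgF_le_one hf1 n _) h')

lemma measurableSet_freq_gt (hf : Measurable f) (hTm : Measurable T) (c : ℝ) :
    MeasurableSet {x : Γ | ∃ᶠ n in atTop, c < avgF T f n x} := by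
  have : {x : Γ | ∃ᶠ n in atTop, c < avgF T f n x} =
      ⋂ N : ℕ, ⋃ n : ℕ, ⋃ (_ : N ≤ n), {x | c < avgF T f n x} := by
    ext x
    simp [frequently_atTop, Set.mem_iInter, Set.mem_iUnion]
  rw [this]
  exact MeasurableSet.iInter fun N => MeasurableSet.iUnion fun n =>
    MeasurableSet.iUnion fun _ => measurableSet_lt measurable_const (measurable_avgF hf hTm n)

lemma measurableSet_freq_lt (hf : Measurable f) (hTm : Measurable T) (c : ℝ) :
    MeasurableSet {x : Γ | ∃ᶠ n in atTop, avgF T f n x < c} := by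
  have : {x : Γ | ∃ᶠ n in atTop, avgF T f n x < c} =
      ⋂ N : ℕ, ⋃ n : ℕ, ⋃ (_ : N ≤ n), {x | avgF T f n x < c} := by
    ext x
    simp [frequently_atTop, Set.mem_iInter, Set.mem_iUnion]
  rw [this]
  exact MeasurableSet.iInter fun N => MeasurableSet.iUnion fun n =>
    MeasurableSet.iUnion fun _ => measurableSet_lt (measurable_avgF hf hTm n) measurable_const

lemma measurableSet_le_limsup (hf : Measurable f) (hTm : Measurable T)
    (hf0 : ∀ x, 0 ≤ f x) (hf1 : ∀ x, f x ≤ 1) (b : ℝ) :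
    MeasurableSet {x : Γ | b ≤ limsup (fun n => avgF T f n x) atTop} := by
  have : {x : Γ | b ≤ limsup (fun n => avgF T f n x) atTop} =
      ⋂ (q : ℚ), ⋂ (_ : (q:ℝ) < b), {x | ∃ᶠ n in atTop, (q:ℝ) < avgF T f n x} := by
    ext x
    simp only [Set.mem_setOf_eq, Set.mem_iInter]
    exact le_limsup_iff_rat (fun n => avgF_nonneg hf0 n x) (fun n => avgF_le_one hf1 n x)
  rw [this]
  exact MeasurableSet.iInter fun q => MeasurableSet.iInter fun _ =>
    measurableSet_freq_gt hf hTm q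

lemma measurableSet_liminf_le (hf : Measurable f) (hTm : Measurable T)
    (hf0 : ∀ x, 0 ≤ f x) (hf1 : ∀ x, f x ≤ 1) (a : ℝ) :
    MeasurableSet {x : Γ | liminf (fun n => avgF T f n x) atTop ≤ a} := by
  have : {x : Γ | liminf (fun n => avgF T f n x) atTop ≤ a} =
      ⋂ (q : ℚ), ⋂ (_ : a < (q:ℝ)), {x | ∃ᶠ n in atTop, avgF T f n x < (q:ℝ)} := by
    ext x
    simp only [Set.mem_setOf_eq, Set.mem_iInter]
    exact liminf_le_iff_rat (fun n => avgF_nonneg hf0 n x) (fun n => avgF_le_one hf1 n x)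
  rw [this]
  exact MeasurableSet.iInter fun q => MeasurableSet.iInter fun _ =>
    measurableSet_freq_lt hf hTm q

/-- **Birkhoff's pointwise ergodic theorem** (bounded nonnegative version):
the Birkhoff averages converge almost everywhere. -/
theorem ae_tendsto_avgF (hT : MeasurePreserving T μ μ) (hf : Measurable f)
    (hf0 : ∀ x, 0 ≤ f x) (hf1 : ∀ x, f x ≤ 1) :
    ∀ᵐ x ∂μ, Tendsto (fun n => avgF T f n x)
      atTop (nhds (limsup (fun n => avgF T f n x) atTop)) := by
  have hTm := hT.measurable
  have habs : ∀ x, |f x| ≤ 1 := fun x => abs_le.mpr ⟨by linarith [hf0 x], hf1 x⟩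
  set ψ : Γ → ℝ := fun x => liminf (fun n => avgF T f n x) atTop with hψdef
  set φ : Γ → ℝ := fun x => limsup (fun n => avgF T f n x) atTop with hφdef
  have hDnull : ∀ a b : ℚ, (a:ℝ) < (b:ℝ) →
      μ ({x | ψ x ≤ (a:ℝ)} ∩ {x | (b:ℝ) ≤ φ x}) = 0 := by
    intro a b hab
    set D := {x | ψ x ≤ (a:ℝ)} ∩ {x | (b:ℝ) ≤ φ x} with hDdef
    have hDm : MeasurableSet D :=
      (measurableSet_liminf_le hf hTm hf0 hf1 _).inter
        (measurableSet_le_limsup hf hTm hf0 hf1 _)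
    have hDinv : ∀ x, T x ∈ D ↔ x ∈ D := by
      intro x
      simp only [hDdef, Set.mem_inter_iff, Set.mem_setOf_eq, hψdef, hφdef,
        liminf_avgF_comp hf0 hf1 x, limsup_avgF_comp hf0 hf1 x]
    set α : ℝ := (2*(a:ℝ) + b)/3 with hα
    set β : ℝ := ((a:ℝ) + 2*b)/3 with hβ
    have hαβ : α < β := by rw [hα, hβ]; linarith
    have haα : (a:ℝ) < α := by rw [hα]; linarith
    have hβb : β < (b:ℝ) := by rw [hβ]; linarith
    have hDup : ∀ x ∈ D, ∃ n : ℕ, 0 < birkhoffSum T f n x - n * β := by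
      intro x hx
      have hb : (b:ℝ) ≤ φ x := hx.2
      have hfreq : ∃ᶠ n in atTop, β < avgF T f n x :=
        frequently_lt_of_lt_limsup
          ((isBoundedUnder_of ⟨0, fun n => avgF_nonneg hf0 n x⟩ :
            IsBoundedUnder (· ≥ ·) atTop _).isCoboundedUnder_le) (lt_of_lt_of_le hβb hb)
      obtain ⟨n, hn1, hlt⟩ := frequently_atTop.mp hfreq 1
      have hn' : (0:ℝ) < n := by exact_mod_cast hn1
      refine ⟨n, ?_⟩
      have h3 : (n:ℝ) * ((n:ℝ)⁻¹ * birkhoffSum T f n x) = birkhoffSum T f n x := by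
        field_simp
      have h4 := mul_lt_mul_of_pos_left hlt hn'
      rw [avgF] at h4
      rw [h3] at h4
      linarith
    have hDlow : ∀ x ∈ D, ∃ n : ℕ,
        0 < birkhoffSum T (fun y => 1 - f y) n x - n * (1 - α) := by
      intro x hx
      have ha : ψ x ≤ (a:ℝ) := hx.1
      have hfreq : ∃ᶠ n in atTop, avgF T f n x < α :=
        frequently_lt_of_liminf_lt
          ((isBoundedUnder_of ⟨1, fun n => avgF_le_one hf1 n x⟩ :
            IsBoundedUnder (· ≤ ·) atTop _).isCoboundedUnder_ge) (lt_of_le_of_lt ha haα)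
      obtain ⟨n, hn1, hlt⟩ := frequently_atTop.mp hfreq 1
      have hn' : (0:ℝ) < n := by exact_mod_cast hn1
      refine ⟨n, ?_⟩
      have hsum1 : birkhoffSum T (fun y => 1 - f y) n x = n - birkhoffSum T f n x := by
        simp [birkhoffSum, Finset.sum_sub_distrib]
      have h3 : (n:ℝ) * ((n:ℝ)⁻¹ * birkhoffSum T f n x) = birkhoffSum T f n x := by
        field_simp
      have h4 := mul_lt_mul_of_pos_left hlt hn'
      rw [avgF] at h4
      rw [h3] at h4
      rw [hsum1]
      linarith
    have h1 := invariant_bound hT hf habs β hDm hDinv hDup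
    have h2 := invariant_bound (f := fun y => 1 - f y) hT (measurable_const.sub hf)
      (fun x => abs_le.mpr ⟨by linarith [hf1 x], by linarith [hf0 x]⟩)
      (1 - α) hDm hDinv hDlow
    have hfint : Integrable f μ := integrable_of_bounded hf habs
    have hsplit : ∫ x in D, (1 - f x) ∂μ = (μ D).toReal - ∫ x in D, f x ∂μ := by
      rw [integral_sub (integrable_const 1).integrableOn hfint.integrableOn]
      simp [setIntegral_const, measureReal_def]
    rw [hsplit] at h2
    have hm0 : (μ D).toReal = 0 := by
      nlinarith [ENNReal.toReal_nonneg (a := μ D)]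
    have hfin : μ D ≠ ⊤ := measure_ne_top μ D
    rcases (ENNReal.toReal_eq_zero_iff _).mp hm0 with h | h
    · exact h
    · exact absurd h hfin
  rw [ae_iff]
  set NE := ⋃ (p : {p : ℚ × ℚ // ((p.1:ℚ):ℝ) < ((p.2:ℚ):ℝ)}),
    ({x | ψ x ≤ ((p:{p : ℚ × ℚ // ((p.1:ℚ):ℝ) < ((p.2:ℚ):ℝ)}).1.1:ℝ)} ∩
      {x | (((p:{p : ℚ × ℚ // ((p.1:ℚ):ℝ) < ((p.2:ℚ):ℝ)}).1.2:ℚ):ℝ) ≤ φ x}) with hNEdef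
  have hNE : μ NE = 0 :=
    measure_iUnion_null fun p => hDnull p.1.1 p.1.2 p.2
  refine measure_mono_null ?_ hNE
  intro x hx
  simp only [Set.mem_setOf_eq] at hx
  have hbd1 : IsBoundedUnder (· ≤ ·) atTop (fun n => avgF T f n x) :=
    isBoundedUnder_of ⟨1, fun n => avgF_le_one hf1 n x⟩
  have hbd2 : IsBoundedUnder (· ≥ ·) atTop (fun n => avgF T f n x) :=
    isBoundedUnder_of ⟨0, fun n => avgF_nonneg hf0 n x⟩
  have hne : ψ x ≠ φ x := by
    intro heq
    exact hx (tendsto_of_liminf_eq_limsup heq rfl hbd1 hbd2)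
  have hlt : ψ x < φ x := lt_of_le_of_ne (liminf_le_limsup hbd1 hbd2) hne
  obtain ⟨a, ha1, ha2⟩ := exists_rat_btwn hlt
  obtain ⟨b, hb1, hb2⟩ := exists_rat_btwn ha2
  refine Set.mem_iUnion.mpr ⟨⟨(a, b), ?_⟩, ⟨ha1.le, hb2.le⟩⟩
  exact_mod_cast hb1

end FAPP

open FAPP

theorem stmt_4 {Γ : Type*} [MeasurableSpace Γ] (μ : Measure Γ) [IsProbabilityMeasure μ]
    (T : Γ → Γ) (hT : MeasurePreserving T μ μ)
    (ε : ℝ) (hε0 : 0 < ε) (hε1 : ε ≤ 1)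
    (E : Set Γ) (hE : MeasurableSet E) (hEμ : μ E = ENNReal.ofReal (1 - ε))
    (G : Set Γ)
    (hG : G = {x : Γ | ∃ L : ℝ,
      Tendsto (fun n => birkhoffAvg T E n x) atTop (nhds L) ∧ 1 - Real.sqrt ε ≤ L}) :
    ENNReal.ofReal (1 - Real.sqrt ε) < μ G ∧
      ∀ x ∈ G, ∀ L : ℝ, Tendsto (fun n => birkhoffAvg T E n x) atTop (nhds L) →
        |L - (μ E).toReal| ≤ Real.sqrt ε := by
  have hTm := hT.measurable
  set f : Γ → ℝ := E.indicator (fun _ => (1:ℝ)) with hfdef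
  have hf : Measurable f := measurable_const.indicator hE
  have hf0 : ∀ x, 0 ≤ f x := fun x => Set.indicator_nonneg (fun _ _ => zero_le_one) x
  have hf1 : ∀ x, f x ≤ 1 := by
    intro x; by_cases hx : x ∈ E <;> simp [hfdef, hx]
  have habs : ∀ x, |f x| ≤ 1 := fun x => abs_le.mpr ⟨by linarith [hf0 x], hf1 x⟩
  have heqavg : ∀ x, (fun n => birkhoffAvg T E n x) = fun n => avgF T f n x := fun x => rfl
  set sε : ℝ := Real.sqrt ε with hsεdef
  have hsε0 : 0 < sε := Real.sqrt_pos.mpr hε0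
  have hsε1 : sε ≤ 1 := Real.sqrt_le_one.mpr hε1
  have hεsε : ε ≤ sε := by nlinarith [Real.mul_self_sqrt hε0.le]
  set φ : Γ → ℝ := fun x => limsup (fun n => avgF T f n x) atTop with hφdef
  have hae := ae_tendsto_avgF hT hf hf0 hf1
  have hφ0 : ∀ x, 0 ≤ φ x := fun x =>
    le_limsup_of_frequently_le (Frequently.of_forall fun n => avgF_nonneg hf0 n x)
      (isBoundedUnder_of ⟨1, fun n => avgF_le_one hf1 n x⟩)
  have hφ1 : ∀ x, φ x ≤ 1 := fun x =>
    limsup_le_of_le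
      ((isBoundedUnder_of ⟨0, fun n => avgF_nonneg hf0 n x⟩ :
        IsBoundedUnder (· ≥ ·) atTop _).isCoboundedUnder_le)
      (Eventually.of_forall fun n => avgF_le_one hf1 n x)
  have hφae : AEMeasurable φ μ :=
    aemeasurable_of_tendsto_metrizable_ae atTop
      (fun n => (measurable_avgF hf hTm n).aemeasurable) hae
  have hφint : Integrable φ μ :=
    ⟨hφae.aestronglyMeasurable, HasFiniteIntegral.of_bounded (C := 1)
      (Eventually.of_forall fun x => by
        rw [Real.norm_eq_abs]; exact abs_le.mpr ⟨by linarith [hφ0 x], hφ1 x⟩)⟩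
  have hEreal : (μ E).toReal = 1 - ε := by
    rw [hEμ, ENNReal.toReal_ofReal (by linarith)]
  have hintf : ∫ x, f x ∂μ = 1 - ε := by
    rw [← hEreal]; exact integral_indicator_one hE
  have hintavg : ∀ n : ℕ, 1 ≤ n → ∫ x, avgF T f n x ∂μ = 1 - ε := by
    intro n hn
    have hn' : (n:ℝ) ≠ 0 := by positivity
    have h1 : ∫ x, avgF T f n x ∂μ = (n:ℝ)⁻¹ * ∫ x, birkhoffSum T f n x ∂μ := by
      simp only [avgF]
      exact integral_const_mul _ _
    have h2 : ∫ x, birkhoffSum T f n x ∂μ = n * (1 - ε) := by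
      have h3 : ∀ i : ℕ, ∫ x, f (T^[i] x) ∂μ = 1 - ε := by
        intro i
        rw [← hintf, ← integral_map (hT.iterate i).aemeasurable hf.aestronglyMeasurable,
          (hT.iterate i).map_eq]
      have h4 : ∫ x, birkhoffSum T f n x ∂μ =
          ∑ i ∈ Finset.range n, ∫ x, f (T^[i] x) ∂μ := by
        simp only [birkhoffSum]
        exact integral_finset_sum _ (fun i _ =>
          integrable_of_bounded (hf.comp (hTm.iterate i)) (fun x => habs _))
      rw [h4]
      simp [h3, mul_comm]; ring
    rw [h1, h2, ← mul_assoc, inv_mul_cancel₀ hn', one_mul]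
  have hlim2 : Tendsto (fun n => ∫ x, avgF T f n x ∂μ) atTop (nhds (∫ x, φ x ∂μ)) :=
    tendsto_integral_of_dominated_convergence (bound := fun _ => (1:ℝ))
      (fun n => (measurable_avgF hf hTm n).aestronglyMeasurable) (integrable_const 1)
      (fun n => Eventually.of_forall fun x => by
        have h1 := avgF_nonneg (T := T) hf0 n x
        have h2 := avgF_le_one (T := T) hf1 n x
        simp only [Real.norm_eq_abs, abs_le]
        exact ⟨by linarith, by linarith⟩)
      hae
  have hconst : Tendsto (fun n : ℕ => ∫ x, avgF T f n x ∂μ) atTop (nhds (1 - ε)) := by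
    refine Tendsto.congr' ?_ tendsto_const_nhds
    filter_upwards [eventually_ge_atTop 1] with n hn
    exact (hintavg n hn).symm
  have hφint_eq : ∫ x, φ x ∂μ = 1 - ε := tendsto_nhds_unique hlim2 hconst
  set W : Set Γ := {x | 1 - sε ≤ φ x} with hWdef
  have hWm : MeasurableSet W := measurableSet_le_limsup hf hTm hf0 hf1 (1 - sε)
  set B : Set Γ := Wᶜ with hBdef
  have hBm : MeasurableSet B := hWm.compl
  have hBsub : ∀ x ∈ B, φ x < 1 - sε := fun x hx => not_le.mp hx
  have hone_sub_int : Integrable (fun x => 1 - φ x) μ := (integrable_const 1).sub hφint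
  have e1 : ∫ x in B, (1 - φ x) ∂μ ≤ ∫ x, (1 - φ x) ∂μ :=
    setIntegral_le_integral hone_sub_int
      (Eventually.of_forall fun x => by simp only [Pi.zero_apply]; linarith [hφ1 x])
  have e2 : ∫ x, (1 - φ x) ∂μ = ε := by
    rw [integral_sub (integrable_const 1) hφint, hφint_eq]
    simp
  have e3 : sε * (μ B).toReal ≤ ∫ x in B, (1 - φ x) ∂μ := by
    have := setIntegral_mono_on
      ((integrable_const sε).integrableOn : IntegrableOn (fun _ => sε) B μ)
      hone_sub_int.integrableOn hBm (fun x hx => by linarith [hBsub x hx])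
    rwa [setIntegral_const, smul_eq_mul, mul_comm] at this
  have h_strict : (μ B).toReal < sε := by
    by_cases hB0 : μ B = 0
    · rw [hB0]; simpa using hsε0
    · have hBpos : 0 < μ B := lt_of_le_of_ne zero_le (Ne.symm hB0)
      have hgm_int : IntegrableOn (fun x => 1 - φ x - sε) B μ :=
        (hone_sub_int.sub (integrable_const sε)).integrableOn
      have h_nonneg : 0 ≤ᵐ[μ.restrict B] fun x => 1 - φ x - sε :=
        (ae_restrict_iff' hBm).mpr (Eventually.of_forall fun x hx => by
          have := hBsub x hx; simp only [Pi.zero_apply]; linarith)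
      have hsupp : 0 < ∫ x in B, (1 - φ x - sε) ∂μ := by
        rw [setIntegral_pos_iff_support_of_nonneg_ae h_nonneg hgm_int]
        refine lt_of_lt_of_le hBpos (measure_mono fun x hx => ?_)
        exact ⟨by have := hBsub x hx; simp only [Function.mem_support]; intro h; nlinarith, hx⟩
      have hsplit : ∫ x in B, (1 - φ x - sε) ∂μ =
          (∫ x in B, (1 - φ x) ∂μ) - sε * (μ B).toReal := by
        rw [integral_sub hone_sub_int.integrableOn
          ((integrable_const sε).integrableOn : IntegrableOn (fun _ => sε) B μ),
          setIntegral_const, smul_eq_mul, mul_comm, measureReal_def]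
      have hlt : sε * (μ B).toReal < ε := by
        rw [hsplit] at hsupp; linarith
      have hε_eq : ε = sε * sε := (Real.mul_self_sqrt hε0.le).symm
      rw [hε_eq] at hlt
      exact lt_of_mul_lt_mul_left hlt hsε0.le
  have hWB : μ W + μ B = 1 := by
    rw [hBdef, measure_add_measure_compl hWm, measure_univ]
  have hWtoReal : 1 - sε < (μ W).toReal := by
    have h1 : (μ W).toReal + (μ B).toReal = 1 := by
      rw [← ENNReal.toReal_add (measure_ne_top μ W) (measure_ne_top μ B), hWB]
      simp
    linarith
  have hμW : ENNReal.ofReal (1 - sε) < μ W := by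
    rw [← ENNReal.ofReal_toReal (measure_ne_top μ W)]
    exact (ENNReal.ofReal_lt_ofReal_iff (lt_of_le_of_lt (by linarith) hWtoReal)).mpr hWtoReal
  set bad : Set Γ := {x | ¬ Tendsto (fun n => avgF T f n x) atTop (nhds (φ x))} with hbaddef
  have hbad : μ bad = 0 := ae_iff.mp hae
  have hGsub : W \ bad ⊆ G := by
    rintro x ⟨hxW, hxb⟩
    rw [hG]
    refine ⟨φ x, ?_, hxW⟩
    rw [heqavg x]
    exact not_not.mp hxb
  constructor
  · calc ENNReal.ofReal (1 - sε) < μ W := hμW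
    _ = μ (W \ bad) := (measure_diff_null hbad).symm
    _ ≤ μ G := measure_mono hGsub
  · intro x hx L hL
    rw [hG] at hx
    obtain ⟨L₀, hL₀, hL₀ge⟩ := hx
    have hLL₀ : L = L₀ := tendsto_nhds_unique hL hL₀
    have hL1 : L ≤ 1 := le_of_tendsto' hL fun n => avgF_le_one (T := T) hf1 n x
    rw [hEreal]
    rw [hLL₀] at hL1 ⊢
    exact abs_le.mpr ⟨by linarith, by linarith⟩
end

section
/- Let (Γ, μ) be a probability space and T : Γ → Γ a measure-preserving map. Let ε be a real number with 0 < ε ≤ 1. Let Γ_{M_1}, …, Γ_{M_n} be finitely many pairwise disjoint measurable sets whose union is Γ, and suppose one of them, Γ_{Eq}, satisfies μ(Γ_{Eq}) = 1 − ε. Then there exists a measurable set G ⊆ Γ with μ(G) > 1 − √ε such that for every x ∈ G and every index i, the Birkhoff time average Â_{Γ_{M_i}}(x) = lim_{n→∞} (1/n) ∑_{j=0}^{n−1} 1_{Γ_{M_i}}(T^j x) exists and satisfies |Â_{Γ_{M_i}}(x) − μ(Γ_{M_i})| ≤ √ε. -/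
open MeasureTheory Filter


section Limsup

/-- If two bounded real sequences have difference tending to zero,
their limsups agree (one inequality). -/
lemma limsup_le_limsup_of_tendsto_sub {u v : ℕ → ℝ}
    (hu : ∀ m, |u m| ≤ 1) (hv : ∀ m, |v m| ≤ 1)
    (hd : Tendsto (fun m => u m - v m) atTop (nhds 0)) :
    limsup u atTop ≤ limsup v atTop := by
  have hbu : IsBoundedUnder (· ≤ ·) atTop u := isBoundedUnder_of ⟨1, fun m => (abs_le.1 (hu m)).2⟩
  have hbu' : IsBoundedUnder (· ≥ ·) atTop u :=
    isBoundedUnder_of ⟨-1, fun m => (abs_le.1 (hu m)).1⟩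
  have hbv : IsBoundedUnder (· ≤ ·) atTop v := isBoundedUnder_of ⟨1, fun m => (abs_le.1 (hv m)).2⟩
  have hbv' : IsBoundedUnder (· ≥ ·) atTop v :=
    isBoundedUnder_of ⟨-1, fun m => (abs_le.1 (hv m)).1⟩
  refine le_of_forall_gt_imp_ge_of_dense fun c hc => ?_
  obtain ⟨c', hc1, hc2⟩ := exists_between hc
  have h1 : ∀ᶠ m in atTop, v m < c' := eventually_lt_of_limsup_lt hc1 hbv
  have h2 : ∀ᶠ m in atTop, |u m - v m| < c - c' := by
    have := hd (Metric.ball_mem_nhds (0:ℝ) (by linarith : (0:ℝ) < c - c'))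
    simpa [Real.dist_eq] using this
  have h3 : ∀ᶠ m in atTop, u m ≤ c := by
    filter_upwards [h1, h2] with m hm1 hm2
    have := abs_lt.1 hm2
    linarith [this.2]
  exact limsup_le_of_le hbu'.isCoboundedUnder_le h3

lemma liminf_le_liminf_of_tendsto_sub {u v : ℕ → ℝ}
    (hu : ∀ m, |u m| ≤ 1) (hv : ∀ m, |v m| ≤ 1)
    (hd : Tendsto (fun m => u m - v m) atTop (nhds 0)) :
    liminf u atTop ≤ liminf v atTop := by
  have hbu' : IsBoundedUnder (· ≥ ·) atTop u :=
    isBoundedUnder_of ⟨-1, fun m => (abs_le.1 (hu m)).1⟩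
  have hbv : IsBoundedUnder (· ≤ ·) atTop v := isBoundedUnder_of ⟨1, fun m => (abs_le.1 (hv m)).2⟩
  refine le_of_forall_lt_imp_le_of_dense fun c hc => ?_
  obtain ⟨c', hc1, hc2⟩ := exists_between hc
  have h1 : ∀ᶠ m in atTop, c' < u m := eventually_lt_of_lt_liminf hc2 hbu'
  have h2 : ∀ᶠ m in atTop, |u m - v m| < c' - c := by
    have := hd (Metric.ball_mem_nhds (0:ℝ) (by linarith : (0:ℝ) < c' - c))
    simpa [Real.dist_eq] using this
  have h3 : ∀ᶠ m in atTop, c ≤ v m := by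
    filter_upwards [h1, h2] with m hm1 hm2
    have := abs_lt.1 hm2
    linarith [this.2]
  exact le_liminf_of_le hbv.isCoboundedUnder_ge h3

lemma limsup_eq_limsup_of_tendsto_sub {u v : ℕ → ℝ}
    (hu : ∀ m, |u m| ≤ 1) (hv : ∀ m, |v m| ≤ 1)
    (hd : Tendsto (fun m => u m - v m) atTop (nhds 0)) :
    limsup u atTop = limsup v atTop := by
  refine le_antisymm (limsup_le_limsup_of_tendsto_sub hu hv hd)
    (limsup_le_limsup_of_tendsto_sub hv hu ?_)
  have := hd.neg
  simpa using this

lemma liminf_eq_liminf_of_tendsto_sub {u v : ℕ → ℝ}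
    (hu : ∀ m, |u m| ≤ 1) (hv : ∀ m, |v m| ≤ 1)
    (hd : Tendsto (fun m => u m - v m) atTop (nhds 0)) :
    liminf u atTop = liminf v atTop := by
  refine le_antisymm (liminf_le_liminf_of_tendsto_sub hu hv hd)
    (liminf_le_liminf_of_tendsto_sub hv hu ?_)
  have := hd.neg
  simpa using this

end Limsup

section Garsia

variable {Γ : Type*} [MeasurableSpace Γ]

/-- Garsia's maximal function: `garsia T g N x = max (0, max_{1 ≤ n ≤ N} S_n g x)`. -/
noncomputable def garsia (T : Γ → Γ) (g : Γ → ℝ) : ℕ → Γ → ℝ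
  | 0 => fun _ => 0
  | (N+1) => fun x => max (g x + garsia T g N (T x)) 0

lemma garsia_nonneg (T : Γ → Γ) (g : Γ → ℝ) : ∀ N x, 0 ≤ garsia T g N x
  | 0, _ => le_refl 0
  | (N+1), x => le_max_right _ _

lemma garsia_mono (T : Γ → Γ) (g : Γ → ℝ) : ∀ N x, garsia T g N x ≤ garsia T g (N+1) x
  | 0, x => garsia_nonneg T g 1 x
  | (N+1), x => max_le_max (add_le_add_right (garsia_mono T g N (T x)) _) le_rfl

lemma garsia_measurable {T : Γ → Γ} {g : Γ → ℝ} (hT : Measurable T) (hg : Measurable g) :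
    ∀ N, Measurable (garsia T g N)
  | 0 => measurable_const
  | (N+1) => ((hg.add ((garsia_measurable hT hg N).comp hT)).max measurable_const)

lemma garsia_bound (T : Γ → Γ) {g : Γ → ℝ} {C : ℝ} (hC : ∀ x, |g x| ≤ C) :
    ∀ N x, garsia T g N x ≤ N * C
  | 0, x => by simp [garsia]
  | (N+1), x => by
    have h0 : 0 ≤ C := le_trans (abs_nonneg _) (hC x)
    have h1 := garsia_bound T hC N (T x)
    have h2 := (abs_le.1 (hC x)).2
    show max (g x + garsia T g N (T x)) 0 ≤ _
    push_cast
    refine max_le (by linarith) (by positivity)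

lemma birkhoffSum_le_garsia (T : Γ → Γ) (g : Γ → ℝ) :
    ∀ n x, birkhoffSum T g n x ≤ garsia T g n x
  | 0, x => by simp [birkhoffSum_zero, garsia]
  | (n+1), x => by
    rw [birkhoffSum_succ']
    exact le_max_of_le_left (add_le_add_right (birkhoffSum_le_garsia T g n (T x)) _)

variable {ν : Measure Γ} [IsFiniteMeasure ν] {T : Γ → Γ} {g : Γ → ℝ}

lemma garsia_integrable (hν : MeasurePreserving T ν ν) (hg : Measurable g) {C : ℝ}
    (hC : ∀ x, |g x| ≤ C) (N : ℕ) : Integrable (garsia T g N) ν := by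
  refine ⟨(garsia_measurable hν.measurable hg N).aestronglyMeasurable, ?_⟩
  refine HasFiniteIntegral.of_bounded (C := N * C) (ae_of_all _ fun x => ?_)
  rw [Real.norm_eq_abs, abs_of_nonneg (garsia_nonneg T g N x)]
  exact garsia_bound T hC N x

lemma integral_comp_eq (hν : MeasurePreserving T ν ν) {h : Γ → ℝ} (hh : Measurable h) :
    ∫ x, h (T x) ∂ν = ∫ x, h x ∂ν := by
  rw [← integral_map hν.measurable.aemeasurable hh.aestronglyMeasurable, hν.map_eq]

/-- Garsia's maximal ergodic theorem. -/
lemma maximal_ergodic (hν : MeasurePreserving T ν ν) (hg : Measurable g) {C : ℝ}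
    (hC : ∀ x, |g x| ≤ C) (N : ℕ) :
    0 ≤ ∫ x in {x | 0 < garsia T g N x}, g x ∂ν := by
  cases N with
  | zero => simp [garsia]
  | succ N =>
    set A := {x | 0 < garsia T g (N+1) x} with hA
    have hAm : MeasurableSet A := measurableSet_lt measurable_const
      (garsia_measurable hν.measurable hg (N+1))
    have hgi : Integrable g ν := ⟨hg.aestronglyMeasurable,
      HasFiniteIntegral.of_bounded (C := C) (ae_of_all _ fun x => by
        rw [Real.norm_eq_abs]; exact hC x)⟩
    have hγN : Integrable (garsia T g N) ν := garsia_integrable hν hg hC N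
    have hγN1 : Integrable (garsia T g (N+1)) ν := garsia_integrable hν hg hC (N+1)
    have hγNT : Integrable (fun x => garsia T g N (T x)) ν :=
      ⟨((garsia_measurable hν.measurable hg N).comp hν.measurable).aestronglyMeasurable,
        HasFiniteIntegral.of_bounded (C := N * C) (ae_of_all _ fun x => by
          rw [Real.norm_eq_abs, abs_of_nonneg (garsia_nonneg T g N (T x))]
          exact garsia_bound T hC N (T x))⟩
    have key : ∀ x, garsia T g (N+1) x - garsia T g N (T x) ≤ A.indicator g x := by
      intro x
      by_cases hx : x ∈ A
      · rw [Set.indicator_of_mem hx]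
        have hpos : 0 < garsia T g (N+1) x := hx
        have heq : garsia T g (N+1) x = g x + garsia T g N (T x) := by
          have : garsia T g (N+1) x = max (g x + garsia T g N (T x)) 0 := rfl
          rcases max_cases (g x + garsia T g N (T x)) 0 with ⟨h1, _⟩ | ⟨h1, _⟩
          · rw [this, h1]
          · exfalso; rw [this, h1] at hpos; exact lt_irrefl _ hpos
        rw [heq]; ring_nf; exact le_rfl
      · rw [Set.indicator_of_notMem hx]
        have h0 : garsia T g (N+1) x ≤ 0 := not_lt.1 hx
        have h0' : garsia T g (N+1) x = 0 := le_antisymm h0 (garsia_nonneg T g (N+1) x)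
        rw [h0']
        simp [garsia_nonneg T g N (T x)]
    have hint : ∫ x, (garsia T g (N+1) x - garsia T g N (T x)) ∂ν
        ≤ ∫ x, A.indicator g x ∂ν :=
      integral_mono (hγN1.sub hγNT) (hgi.indicator hAm) key
    rw [integral_indicator hAm] at hint
    refine le_trans ?_ hint
    rw [integral_sub hγN1 hγNT,
      integral_comp_eq hν (garsia_measurable hν.measurable hg N)]
    have := integral_mono hγN hγN1 (fun x => garsia_mono T g N x)
    linarith

end Garsia

section Birkhoff

variable {Γ : Type*} [MeasurableSpace Γ] {μ : Measure Γ} [IsProbabilityMeasure μ] {T : Γ → Γ}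

lemma birkhoff_ae_tendsto (hT : MeasurePreserving T μ μ) {f : Γ → ℝ} (hf : Measurable f)
    (h0 : ∀ x, 0 ≤ f x) (h1 : ∀ x, f x ≤ 1) :
    μ {x | ¬ ∃ c, Tendsto (fun m : ℕ => (m:ℝ)⁻¹ * birkhoffSum T f m x) atTop (nhds c)} = 0 := by
  set u : Γ → ℕ → ℝ := fun x m => (m:ℝ)⁻¹ * birkhoffSum T f m x with hu
  have hS0 : ∀ m x, 0 ≤ birkhoffSum T f m x := fun m x =>
    Finset.sum_nonneg fun k _ => h0 _
  have hS1 : ∀ m x, birkhoffSum T f m x ≤ m := by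
    intro m x
    calc birkhoffSum T f m x ≤ ∑ _k ∈ Finset.range m, (1:ℝ) :=
          Finset.sum_le_sum fun k _ => h1 _
      _ = m := by simp
  have hu0 : ∀ x m, 0 ≤ u x m := fun x m => mul_nonneg (by positivity) (hS0 m x)
  have hu1 : ∀ x m, u x m ≤ 1 := by
    intro x m
    rcases Nat.eq_zero_or_pos m with hm | hm
    · simp [hu, hm, birkhoffSum_zero]
    · have hmp : (0:ℝ) < m := by exact_mod_cast hm
      have : u x m ≤ (m:ℝ)⁻¹ * m := by
        exact mul_le_mul_of_nonneg_left (hS1 m x) (by positivity)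
      rwa [inv_mul_cancel₀ (ne_of_gt hmp)] at this
  have huabs : ∀ x m, |u x m| ≤ 1 := fun x m =>
    abs_le.2 ⟨le_trans (by norm_num) (hu0 x m), hu1 x m⟩
  have hum : ∀ m, Measurable (fun x => u x m) := by
    intro m
    apply Measurable.const_mul
    exact Finset.measurable_sum _ fun k _ => hf.comp (hT.measurable.iterate k)
  set ls : Γ → ℝ := fun x => limsup (u x) atTop with hlsdef
  set li : Γ → ℝ := fun x => liminf (u x) atTop with hlidef
  have hls : Measurable ls := Measurable.limsup hum
  have hli : Measurable li := Measurable.liminf hum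
  -- invariance of limsup/liminf
  have hdiffT : ∀ x, Tendsto (fun m => u (T x) m - u x m) atTop (nhds 0) := by
    intro x
    have heq : ∀ m : ℕ, u (T x) m - u x m = (m:ℝ)⁻¹ * (f (T^[m] x) - f x) := by
      intro m
      rw [hu]
      simp only
      rw [← mul_sub, birkhoffSum_apply_sub_birkhoffSum]
    refine squeeze_zero_norm (a := fun m : ℕ => (m:ℝ)⁻¹ * 2) (fun m => ?_) ?_
    · rw [heq m, norm_mul, Real.norm_eq_abs, Real.norm_eq_abs, abs_of_nonneg (by positivity :
        (0:ℝ) ≤ (m:ℝ)⁻¹)]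
      refine mul_le_mul_of_nonneg_left ?_ (by positivity)
      rw [abs_le]
      constructor <;> nlinarith [h0 (T^[m] x), h1 (T^[m] x), h0 x, h1 x]
    · simpa using tendsto_inv_atTop_nhds_zero_nat.mul_const (2:ℝ)
  have hlsT : ∀ x, ls (T x) = ls x := fun x =>
    limsup_eq_limsup_of_tendsto_sub (huabs (T x)) (huabs x) (hdiffT x)
  have hliT : ∀ x, li (T x) = li x := fun x =>
    liminf_eq_liminf_of_tendsto_sub (huabs (T x)) (huabs x) (hdiffT x)
  -- the key null set
  have hE0 : ∀ a b : ℝ, a < b → μ {x | li x < a ∧ b < ls x} = 0 := by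
    intro a b hab
    set E := {x | li x < a ∧ b < ls x} with hEdef
    have hEm : MeasurableSet E :=
      (measurableSet_lt hli measurable_const).inter (measurableSet_lt measurable_const hls)
    have hinv : T ⁻¹' E = E := by
      ext x
      simp only [Set.mem_preimage, hEdef, Set.mem_setOf_eq, hlsT x, hliT x]
    haveI : IsFiniteMeasure (μ.restrict E) :=
      ⟨by rw [Measure.restrict_apply_univ]; exact measure_lt_top μ E⟩
    have hνT : MeasurePreserving T (μ.restrict E) (μ.restrict E) := by
      refine ⟨hT.measurable, ?_⟩
      refine Measure.ext fun s hs => ?_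
      rw [Measure.map_apply hT.measurable hs, Measure.restrict_apply hs,
        Measure.restrict_apply (hT.measurable hs)]
      conv_lhs => rw [← hinv]
      rw [← Set.preimage_inter, hT.measure_preimage (hs.inter hEm).nullMeasurableSet]
    -- generic maximal-ergodic consequence
    have main : ∀ (g : Γ → ℝ) (C : ℝ), Measurable g → (∀ x, |g x| ≤ C) →
        (∀ x ∈ E, ∃ m, 1 ≤ m ∧ 0 < birkhoffSum T g m x) → 0 ≤ ∫ x in E, g x ∂μ := by
      intro g C hg hC hpos
      set A : ℕ → Set Γ := fun N => {x | 0 < garsia T g N x} with hAdef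
      have hAm : ∀ N, MeasurableSet (A N) := fun N =>
        measurableSet_lt measurable_const (garsia_measurable hT.measurable hg N)
      have hAmono : Monotone A := monotone_nat_of_le_succ fun N x hx =>
        lt_of_lt_of_le hx (garsia_mono T g N x)
      have hgi : Integrable g (μ.restrict E) := ⟨hg.aestronglyMeasurable,
        HasFiniteIntegral.of_bounded (C := C) (ae_of_all _ fun x => by
          rw [Real.norm_eq_abs]; exact hC x)⟩
      have hEsub : E ⊆ ⋃ N, A N := by
        intro x hx
        obtain ⟨m, _, hm2⟩ := hpos x hx
        exact Set.mem_iUnion.2 ⟨m, lt_of_lt_of_le hm2 (birkhoffSum_le_garsia T g m x)⟩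
      have htend := tendsto_setIntegral_of_monotone hAm hAmono
        (hgi.integrableOn : IntegrableOn g (⋃ N, A N) (μ.restrict E))
      have h0le : 0 ≤ ∫ x in ⋃ N, A N, g x ∂(μ.restrict E) :=
        ge_of_tendsto' htend fun N => maximal_ergodic hνT hg hC N
      rwa [MeasureTheory.Measure.restrict_restrict (MeasurableSet.iUnion hAm),
        Set.inter_eq_self_of_subset_right hEsub] at h0le
    -- apply to f - b
    have res1 : 0 ≤ ∫ x in E, (f x - b) ∂μ := by
      refine main _ (|b| + 1) (hf.sub measurable_const) (fun x => ?_) (fun x hx => ?_)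
      · have := abs_sub (f x) b
        have h01 : |f x| ≤ 1 := abs_le.2 ⟨by linarith [h0 x], h1 x⟩
        calc |f x - b| ≤ |f x| + |b| := abs_sub _ _
          _ ≤ |b| + 1 := by linarith
      · have hcb : IsCoboundedUnder (· ≤ ·) atTop (u x) :=
          (isBoundedUnder_of ⟨0, fun m => hu0 x m⟩ :
            IsBoundedUnder (· ≥ ·) atTop (u x)).isCoboundedUnder_le
        have hfreq : ∃ᶠ m in atTop, b < u x m := frequently_lt_of_lt_limsup hcb hx.2
        obtain ⟨m, hm1, hmb⟩ := (frequently_atTop.1 hfreq) 1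
        refine ⟨m, hm1, ?_⟩
        have hmp : (0:ℝ) < m := by exact_mod_cast hm1
        have hSgt : (m:ℝ) * b < birkhoffSum T f m x := by
          have := mul_lt_mul_of_pos_left hmb hmp
          rwa [← mul_assoc, mul_inv_cancel₀ (ne_of_gt hmp), one_mul] at this
        have hbs : birkhoffSum T (fun y => f y - b) m x = birkhoffSum T f m x - m * b := by
          simp only [birkhoffSum, Finset.sum_sub_distrib, Finset.sum_const,
            Finset.card_range, nsmul_eq_mul]
        rw [hbs]
        linarith
    -- apply to a - f
    have res2 : 0 ≤ ∫ x in E, (a - f x) ∂μ := by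
      refine main _ (|a| + 1) (measurable_const.sub hf) (fun x => ?_) (fun x hx => ?_)
      · have h01 : |f x| ≤ 1 := abs_le.2 ⟨by linarith [h0 x], h1 x⟩
        calc |a - f x| ≤ |a| + |f x| := abs_sub _ _
          _ ≤ |a| + 1 := by linarith
      · have hcb : IsCoboundedUnder (· ≥ ·) atTop (u x) :=
          (isBoundedUnder_of ⟨1, fun m => hu1 x m⟩ :
            IsBoundedUnder (· ≤ ·) atTop (u x)).isCoboundedUnder_ge
        have hfreq : ∃ᶠ m in atTop, u x m < a := frequently_lt_of_liminf_lt hcb hx.1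
        obtain ⟨m, hm1, hmb⟩ := (frequently_atTop.1 hfreq) 1
        refine ⟨m, hm1, ?_⟩
        have hmp : (0:ℝ) < m := by exact_mod_cast hm1
        have hSlt : birkhoffSum T f m x < (m:ℝ) * a := by
          have := mul_lt_mul_of_pos_left hmb hmp
          rwa [← mul_assoc, mul_inv_cancel₀ (ne_of_gt hmp), one_mul] at this
        have hbs : birkhoffSum T (fun y => a - f y) m x = m * a - birkhoffSum T f m x := by
          simp only [birkhoffSum, Finset.sum_sub_distrib, Finset.sum_const,
            Finset.card_range, nsmul_eq_mul]
        rw [hbs]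
        linarith
    -- combine
    have hfiE : IntegrableOn f E μ := ⟨hf.aestronglyMeasurable,
      HasFiniteIntegral.of_bounded (C := 1) (ae_of_all _ fun x => by
        rw [Real.norm_eq_abs]; exact abs_le.2 ⟨by linarith [h0 x], h1 x⟩)⟩
    have hconst : ∀ c : ℝ, IntegrableOn (fun _ => c) E μ := fun c =>
      integrableOn_const (measure_ne_top μ E)
    rw [integral_sub hfiE (hconst b), setIntegral_const] at res1
    rw [integral_sub (hconst a) hfiE, setIntegral_const] at res2
    have ht0 : (0:ℝ) ≤ (μ E).toReal := ENNReal.toReal_nonneg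
    have ht : (μ E).toReal = 0 := by
      have hb' : (μ E).toReal • b ≤ ∫ x in E, f x ∂μ := by rw [measureReal_def] at res1; linarith
      have ha' : ∫ x in E, f x ∂μ ≤ (μ E).toReal • a := by rw [measureReal_def] at res2; linarith
      rw [smul_eq_mul] at hb' ha'
      nlinarith
    rcases (ENNReal.toReal_eq_zero_iff _).1 ht with h | h
    · exact h
    · exact absurd h (measure_ne_top μ E)
  -- cover the divergence set by countably many E-sets
  set E' : ℚ × ℚ → Set Γ := fun q =>
    {x | li x < (q.1:ℝ) ∧ (q.2:ℝ) < ls x ∧ (q.1:ℝ) < (q.2:ℝ)} with hE'def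
  have hnull : μ (⋃ q : ℚ × ℚ, E' q) = 0 := by
    refine measure_iUnion_null fun q => ?_
    by_cases hq : (q.1:ℝ) < (q.2:ℝ)
    · exact measure_mono_null (t := {x | li x < (q.1:ℝ) ∧ (q.2:ℝ) < ls x})
        (fun x hx => ⟨hx.1, hx.2.1⟩) (hE0 q.1 q.2 hq)
    · have : E' q = ∅ := by
        ext x; simp only [hE'def, Set.mem_setOf_eq, Set.mem_empty_iff_false, iff_false]
        rintro ⟨-, -, h⟩; exact hq h
      rw [this]; exact measure_empty
  refine measure_mono_null (fun x hx => ?_) hnull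
  · have hbdd1 : IsBoundedUnder (· ≤ ·) atTop (u x) := isBoundedUnder_of ⟨1, fun m => hu1 x m⟩
    have hbdd2 : IsBoundedUnder (· ≥ ·) atTop (u x) := isBoundedUnder_of ⟨0, fun m => hu0 x m⟩
    have hle : li x ≤ ls x := liminf_le_limsup hbdd1 hbdd2
    have hne : li x ≠ ls x := by
      intro h
      exact hx ⟨ls x, tendsto_of_liminf_eq_limsup h rfl hbdd1 hbdd2⟩
    have hlt : li x < ls x := lt_of_le_of_ne hle hne
    obtain ⟨a, ha1, ha2⟩ := exists_rat_btwn hlt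
    obtain ⟨b, hb1, hb2⟩ := exists_rat_btwn ha2
    refine Set.mem_iUnion.2 ⟨(a, b), ?_⟩
    simp only [hE'def, Set.mem_setOf_eq]
    exact ⟨ha1, hb2, by exact_mod_cast hb1⟩

end Birkhoff

theorem stmt_5 {Γ : Type*} [MeasurableSpace Γ] (μ : Measure Γ) [IsProbabilityMeasure μ]
    (T : Γ → Γ) (hT : MeasurePreserving T μ μ)
    (ε : ℝ) (hε0 : 0 < ε) (hε1 : ε ≤ 1)
    (n : ℕ) (M : Fin n → Set Γ) (hMmeas : ∀ i, MeasurableSet (M i))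
    (hMdisj : Pairwise (Function.onFun Disjoint M))
    (hMcover : (⋃ i, M i) = Set.univ)
    (i₀ : Fin n) (hEq : μ (M i₀) = ENNReal.ofReal (1 - ε)) :
    ∃ G : Set Γ, MeasurableSet G ∧ ENNReal.ofReal (1 - Real.sqrt ε) < μ G ∧
      ∀ x ∈ G, ∀ i : Fin n, ∃ L : ℝ,
        Tendsto (fun m => birkhoffAvg T (M i) m x) atTop (nhds L) ∧
        |L - (μ (M i)).toReal| ≤ Real.sqrt ε := by
  have hsq0 : 0 < Real.sqrt ε := Real.sqrt_pos.2 hε0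
  have hsq1 : Real.sqrt ε ≤ 1 := by
    rw [show (1:ℝ) = Real.sqrt 1 by rw [Real.sqrt_one]]
    exact Real.sqrt_le_sqrt hε1
  have hεsq : ε ≤ Real.sqrt ε := by
    nlinarith [Real.sq_sqrt hε0.le, Real.sqrt_nonneg ε]
  set fI : Fin n → Γ → ℝ := fun i => (M i).indicator (fun _ => (1:ℝ)) with hfIdef
  have hfim : ∀ i, Measurable (fI i) := fun i => measurable_const.indicator (hMmeas i)
  have hf0 : ∀ i x, 0 ≤ fI i x := fun i x =>
    Set.indicator_nonneg (fun _ _ => zero_le_one) x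
  have hf1 : ∀ i x, fI i x ≤ 1 := by
    intro i x
    by_cases hx : x ∈ M i <;> simp [hfIdef, hx]
  have havg_eq : ∀ (i : Fin n) (m : ℕ) (x : Γ),
      birkhoffAvg T (M i) m x = (m:ℝ)⁻¹ * birkhoffSum T (fI i) m x := fun _ _ _ => rfl
  -- basic bounds on averages
  have hS0 : ∀ i (m : ℕ) x, 0 ≤ birkhoffSum T (fI i) m x := fun i m x =>
    Finset.sum_nonneg fun k _ => hf0 i _
  have hS1 : ∀ i (m : ℕ) x, birkhoffSum T (fI i) m x ≤ m := by
    intro i m x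
    calc birkhoffSum T (fI i) m x ≤ ∑ _k ∈ Finset.range m, (1:ℝ) :=
          Finset.sum_le_sum fun k _ => hf1 i _
      _ = m := by simp
  have hu0 : ∀ i x (m : ℕ), 0 ≤ birkhoffAvg T (M i) m x := by
    intro i x m
    rw [havg_eq]
    exact mul_nonneg (by positivity) (hS0 i m x)
  have hu1 : ∀ i x (m : ℕ), birkhoffAvg T (M i) m x ≤ 1 := by
    intro i x m
    rw [havg_eq]
    rcases Nat.eq_zero_or_pos m with hm | hm
    · simp [hm, birkhoffSum_zero]
    · have hmp : (0:ℝ) < m := by exact_mod_cast hm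
      have : (m:ℝ)⁻¹ * birkhoffSum T (fI i) m x ≤ (m:ℝ)⁻¹ * m :=
        mul_le_mul_of_nonneg_left (hS1 i m x) (by positivity)
      rwa [inv_mul_cancel₀ (ne_of_gt hmp)] at this
  have havgm : ∀ (i : Fin n) (m : ℕ), Measurable (fun x => birkhoffAvg T (M i) m x) := by
    intro i m
    simp only [havg_eq]
    exact (Finset.measurable_sum _ fun k _ =>
      (hfim i).comp (hT.measurable.iterate k)).const_mul _
  -- convergence sets
  set Cs : Fin n → Set Γ := fun i =>
    {x | ∃ c, Tendsto (fun m => birkhoffAvg T (M i) m x) atTop (nhds c)} with hCsdef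
  have hCsm : ∀ i, MeasurableSet (Cs i) := fun i =>
    measurableSet_exists_tendsto fun m => havgm i m
  have hCsnull : ∀ i, μ (Cs i)ᶜ = 0 := by
    intro i
    have := birkhoff_ae_tendsto hT (hfim i) (hf0 i) (hf1 i)
    exact this
  set C : Set Γ := ⋂ i, Cs i with hCdef
  have hCm : MeasurableSet C := MeasurableSet.iInter hCsm
  have hCnull : μ Cᶜ = 0 := by
    rw [hCdef, Set.compl_iInter]
    exact measure_iUnion_null fun i => hCsnull i
  -- the limsup function for i₀
  set ls : Γ → ℝ := fun x => limsup (fun m => birkhoffAvg T (M i₀) m x) atTop with hlsdef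
  have hlsm : Measurable ls := Measurable.limsup fun m => havgm i₀ m
  have hls0 : ∀ x, 0 ≤ ls x := by
    intro x
    refine le_limsup_of_frequently_le (Frequently.of_forall fun m => hu0 i₀ x m) ?_
    exact isBoundedUnder_of ⟨1, fun m => hu1 i₀ x m⟩
  have hls1 : ∀ x, ls x ≤ 1 := by
    intro x
    refine limsup_le_of_le ?_ (Eventually.of_forall fun m => hu1 i₀ x m)
    exact (isBoundedUnder_of ⟨0, fun m => hu0 i₀ x m⟩ :
      IsBoundedUnder (· ≥ ·) atTop _).isCoboundedUnder_le
  have hlsint : Integrable ls μ := ⟨hlsm.aestronglyMeasurable,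
    HasFiniteIntegral.of_bounded (C := 1) (ae_of_all _ fun x => by
      rw [Real.norm_eq_abs]; exact abs_le.2 ⟨by linarith [hls0 x], hls1 x⟩)⟩
  -- a.e. convergence to ls
  have haetend : ∀ᵐ x ∂μ, Tendsto (fun m => birkhoffAvg T (M i₀) m x) atTop (nhds (ls x)) := by
    have h' : ∀ᵐ x ∂μ, x ∈ Cs i₀ := by
      rw [ae_iff]
      exact hCsnull i₀
    filter_upwards [h'] with x hx
    obtain ⟨c, hc⟩ := hx
    convert hc using 2
    exact hc.limsup_eq
  -- integral of ls equals 1 - ε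
  have hfint : ∫ x, fI i₀ x ∂μ = 1 - ε := by
    have h1 : ∫ x, fI i₀ x ∂μ = (μ (M i₀)).toReal := by
      rw [show fI i₀ = (M i₀).indicator (1 : Γ → ℝ) from rfl]
      exact MeasureTheory.integral_indicator_one (hMmeas i₀)
    rw [h1, hEq, ENNReal.toReal_ofReal (by linarith : (0:ℝ) ≤ 1 - ε)]
  have havgint : ∀ m : ℕ, 1 ≤ m → ∫ x, birkhoffAvg T (M i₀) m x ∂μ = 1 - ε := by
    intro m hm
    have hmp : (0:ℝ) < m := by exact_mod_cast hm
    have hfii : ∀ k : ℕ, Integrable (fun x => fI i₀ (T^[k] x)) μ :=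
      fun k => ⟨((hfim i₀).comp (hT.measurable.iterate k)).aestronglyMeasurable,
        HasFiniteIntegral.of_bounded (C := 1) (ae_of_all _ fun x => by
          rw [Real.norm_eq_abs]; exact abs_le.2 ⟨by linarith [hf0 i₀ (T^[k] x)],
            hf1 i₀ (T^[k] x)⟩)⟩
    simp only [havg_eq, birkhoffSum]
    rw [MeasureTheory.integral_const_mul, integral_finset_sum _ (fun k _ => hfii k)]
    have hkint : ∀ k : ℕ, ∫ x, fI i₀ (T^[k] x) ∂μ = 1 - ε := by
      intro k
      rw [integral_comp_eq (hT.iterate k) (hfim i₀), hfint]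
    rw [Finset.sum_congr rfl fun k _ => hkint k, Finset.sum_const, Finset.card_range,
      nsmul_eq_mul]
    field_simp
  have hlsI : ∫ x, ls x ∂μ = 1 - ε := by
    have htend : Tendsto (fun m : ℕ => ∫ x, birkhoffAvg T (M i₀) m x ∂μ) atTop
        (nhds (∫ x, ls x ∂μ)) := by
      refine tendsto_integral_of_dominated_convergence (fun _ => (1:ℝ))
        (fun m => (havgm i₀ m).aestronglyMeasurable) (integrable_const 1)
        (fun m => ae_of_all _ fun x => ?_) haetend
      show ‖birkhoffAvg T (M i₀) m x‖ ≤ 1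
      rw [Real.norm_eq_abs]
      exact abs_le.2 ⟨by linarith [hu0 i₀ x m], hu1 i₀ x m⟩
    have htend' : Tendsto (fun m : ℕ => ∫ x, birkhoffAvg T (M i₀) m x ∂μ) atTop
        (nhds (1 - ε)) := by
      have hconst : Tendsto (fun _ : ℕ => (1 - ε : ℝ)) atTop (nhds (1 - ε)) :=
        tendsto_const_nhds
      refine hconst.congr' ?_
      filter_upwards [eventually_ge_atTop 1] with m hm
      exact (havgint m hm).symm
    exact tendsto_nhds_unique htend htend'
  -- the Markov set
  set gg : Γ → ℝ := fun x => 1 - ls x with hggdef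
  have hggm : Measurable gg := measurable_const.sub hlsm
  have hggint : Integrable gg μ := (integrable_const 1).sub hlsint
  have hggI : ∫ x, gg x ∂μ = ε := by
    rw [hggdef]
    simp only
    rw [integral_sub (integrable_const 1) hlsint, hlsI, integral_const]
    simp
  set D : Set Γ := {x | Real.sqrt ε < gg x} with hDdef
  have hDm : MeasurableSet D := measurableSet_lt measurable_const hggm
  have hDlt : (μ D).toReal < Real.sqrt ε := by
    by_cases hD0 : μ D = 0
    · rw [hD0]; simpa using hsq0
    · have h1 := setIntegral_gt_gt (Real.sqrt_nonneg ε) hggint.integrableOn hD0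
      have h2 : ∫ x in D, gg x ∂μ ≤ ∫ x, gg x ∂μ :=
        setIntegral_le_integral hggint (ae_of_all _ fun x => by
          simp only [hggdef, Pi.zero_apply]; linarith [hls1 x])
      have h3 : (μ D).toReal * Real.sqrt ε < ε := lt_of_lt_of_le (by exact h1) (by
        rw [hggI] at h2; exact h2)
      nlinarith [Real.sq_sqrt hε0.le, ENNReal.toReal_nonneg (a := μ D)]
  refine ⟨C ∩ Dᶜ, hCm.inter hDm.compl, ?_, ?_⟩
  · -- measure bound
    have hsub : Dᶜ ⊆ (C ∩ Dᶜ) ∪ Cᶜ := by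
      intro x hx
      by_cases hxC : x ∈ C
      · exact Or.inl ⟨hxC, hx⟩
      · exact Or.inr hxC
    have hle : μ Dᶜ ≤ μ (C ∩ Dᶜ) := by
      calc μ Dᶜ ≤ μ ((C ∩ Dᶜ) ∪ Cᶜ) := measure_mono hsub
        _ ≤ μ (C ∩ Dᶜ) + μ Cᶜ := measure_union_le _ _
        _ = μ (C ∩ Dᶜ) := by rw [hCnull, add_zero]
    refine lt_of_lt_of_le ?_ hle
    rw [ENNReal.ofReal_lt_iff_lt_toReal (by linarith) (measure_ne_top μ Dᶜ)]
    have hcompl : μ Dᶜ = 1 - μ D := prob_compl_eq_one_sub hDm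
    rw [hcompl, ENNReal.toReal_sub_of_le prob_le_one ENNReal.one_ne_top, ENNReal.toReal_one]
    linarith
  · -- pointwise conclusion
    intro x hx i
    have hxC : x ∈ C := hx.1
    have hxD : ¬ Real.sqrt ε < gg x := hx.2
    have hgx : 1 - ls x ≤ Real.sqrt ε := not_lt.1 hxD
    obtain ⟨c₀, hc₀⟩ := Set.mem_iInter.1 hxC i₀
    have hlsx : ls x = c₀ := hc₀.limsup_eq
    obtain ⟨c, hc⟩ := Set.mem_iInter.1 hxC i
    refine ⟨c, hc, ?_⟩
    by_cases hii : i = i₀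
    · subst hii
      have hcc : c = c₀ := tendsto_nhds_unique hc hc₀
      rw [hEq, ENNReal.toReal_ofReal (by linarith : (0:ℝ) ≤ 1 - ε), hcc, ← hlsx]
      rw [abs_le]
      constructor
      · linarith
      · linarith [hls1 x]
    · -- i ≠ i₀
      have hdis : Disjoint (M i) (M i₀) := hMdisj hii
      have h0c : 0 ≤ c := ge_of_tendsto' hc fun m => hu0 i x m
      have hcsum : c + c₀ ≤ 1 := by
        refine le_of_tendsto (hc.add hc₀) ?_
        filter_upwards [eventually_ge_atTop 1] with m hm
        have hmp : (0:ℝ) < m := by exact_mod_cast hm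
        have hpt : ∀ y, fI i y + fI i₀ y ≤ 1 := by
          intro y
          by_cases hy : y ∈ M i
          · have hy0 : y ∉ M i₀ := fun h => Set.disjoint_left.1 hdis hy h
            simp [hfIdef, hy, hy0]
          · simp only [hfIdef, Set.indicator_of_notMem hy, zero_add]
            exact hf1 i₀ y
        have hsum : birkhoffSum T (fI i) m x + birkhoffSum T (fI i₀) m x ≤ m := by
          rw [birkhoffSum, birkhoffSum, ← Finset.sum_add_distrib]
          calc (∑ k ∈ Finset.range m, (fI i (T^[k] x) + fI i₀ (T^[k] x)))
              ≤ ∑ _k ∈ Finset.range m, (1:ℝ) := Finset.sum_le_sum fun k _ => hpt _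
            _ = m := by simp
        rw [havg_eq, havg_eq, ← mul_add]
        have : (m:ℝ)⁻¹ * (birkhoffSum T (fI i) m x + birkhoffSum T (fI i₀) m x)
            ≤ (m:ℝ)⁻¹ * m := mul_le_mul_of_nonneg_left hsum (by positivity)
        rwa [inv_mul_cancel₀ (ne_of_gt hmp)] at this
      have hcle : c ≤ Real.sqrt ε := by
        have : c ≤ 1 - ls x := by rw [hlsx]; linarith
        linarith
      have htle : (μ (M i)).toReal ≤ ε := by
        have hsubc : M i ⊆ (M i₀)ᶜ := fun y hy hy0 => Set.disjoint_left.1 hdis hy hy0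
        have hmle : μ (M i) ≤ μ ((M i₀)ᶜ) := measure_mono hsubc
        have hcompl : μ ((M i₀)ᶜ) = 1 - ENNReal.ofReal (1 - ε) := by
          rw [prob_compl_eq_one_sub (hMmeas i₀), hEq]
        have hne : (1 : ENNReal) - ENNReal.ofReal (1 - ε) ≠ ⊤ :=
          ENNReal.sub_ne_top ENNReal.one_ne_top
        have := ENNReal.toReal_mono (by rw [← hcompl] at hne ⊢; exact hne)
          (hcompl ▸ hmle)
        rw [ENNReal.toReal_sub_of_le (ENNReal.ofReal_le_one.2 (by linarith))
          ENNReal.one_ne_top, ENNReal.toReal_one,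
          ENNReal.toReal_ofReal (by linarith : (0:ℝ) ≤ 1 - ε)] at this
        linarith
      rw [abs_le]
      constructor
      · linarith [ENNReal.toReal_nonneg (a := μ (M i))]
      · linarith [ENNReal.toReal_nonneg (a := μ (M i))]
end
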